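/- arXiv:2010.06554 — 6 statements merged into one kernel-verified Lean document; each statement's English description precedes it below -/
import Mathlib

section
/- For i.i.d. copies ξ₁, ξ₂, ξ₃ of a discrete random variable ξ with |supp(ξ)| ≥ 2 and for either sign u ∈ {+1, −1}, every atom of ξ₁ + ξ₂ + u·ξ₃ has probability strictly less than ‖p‖₂²; in fact there exists c_ξ > 0 depending only on ξ such that P[ξ₁ + ξ₂ + u ξ₃ = s] ≤ ‖p‖₂² − c_ξ for all s ∈ ℝ. -/
open MeasureTheory ProbabilityTheory Finset

open scoped Classical in
noncomputable def QQ {k : ℕ} (a p : Fin k → ℝ) (u t : ℝ) : ℝ :=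
  ∑ q ∈ univ.filter (fun q : Fin k × Fin k => a q.1 + u * a q.2 = t), p q.1 * p q.2

open scoped Classical

lemma QQ_nonneg {k : ℕ} (a p : Fin k → ℝ) (hp : ∀ i, 0 < p i) (u t : ℝ) : 0 ≤ QQ a p u t :=
  Finset.sum_nonneg fun q _ => mul_nonneg (hp q.1).le (hp q.2).le

lemma fst_injOn {k : ℕ} {a : Fin k → ℝ} (ha : Function.Injective a) {u : ℝ} (hu : u ≠ 0)
    (t : ℝ) : Set.InjOn Prod.fst
      ((univ.filter (fun q : Fin k × Fin k => a q.1 + u * a q.2 = t)) : Set (Fin k × Fin k)) := by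
  intro q hq q' hq' h
  simp only [coe_filter, Set.mem_setOf_eq, mem_univ, true_and] at hq hq'
  have h2 : u * a q.2 = u * a q'.2 := by rw [← h] at hq'; linarith
  have := mul_left_cancel₀ hu h2
  exact Prod.ext h (ha this)

lemma snd_injOn {k : ℕ} {a : Fin k → ℝ} (ha : Function.Injective a) {u : ℝ} (hu : u ≠ 0)
    (t : ℝ) : Set.InjOn Prod.snd
      ((univ.filter (fun q : Fin k × Fin k => a q.1 + u * a q.2 = t)) : Set (Fin k × Fin k)) := by
  intro q hq q' hq' h
  simp only [coe_filter, Set.mem_setOf_eq, mem_univ, true_and] at hq hq'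
  have h2 : a q.1 = a q'.1 := by rw [h] at hq; linarith
  exact Prod.ext (ha h2) h

lemma sum_fst_sq_le {k : ℕ} {a p : Fin k → ℝ} (ha : Function.Injective a) {u : ℝ} (hu : u ≠ 0)
    (t : ℝ) :
    ∑ q ∈ univ.filter (fun q : Fin k × Fin k => a q.1 + u * a q.2 = t), p q.1 ^ 2
      ≤ ∑ i, p i ^ 2 := by
  have himg : ∑ i ∈ (univ.filter (fun q : Fin k × Fin k => a q.1 + u * a q.2 = t)).image Prod.fst,
      p i ^ 2 = ∑ q ∈ univ.filter (fun q : Fin k × Fin k => a q.1 + u * a q.2 = t), p q.1 ^ 2 :=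
    Finset.sum_image (fun q hq q' hq' h =>
      fst_injOn ha hu t (Finset.mem_coe.2 hq) (Finset.mem_coe.2 hq') h)
  rw [← himg]
  exact Finset.sum_le_sum_of_subset_of_nonneg (subset_univ _) (fun i _ _ => sq_nonneg _)

lemma sum_snd_sq_le {k : ℕ} {a p : Fin k → ℝ} (ha : Function.Injective a) {u : ℝ} (hu : u ≠ 0)
    (t : ℝ) :
    ∑ q ∈ univ.filter (fun q : Fin k × Fin k => a q.1 + u * a q.2 = t), p q.2 ^ 2
      ≤ ∑ i, p i ^ 2 := by
  have himg : ∑ i ∈ (univ.filter (fun q : Fin k × Fin k => a q.1 + u * a q.2 = t)).image Prod.snd,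
      p i ^ 2 = ∑ q ∈ univ.filter (fun q : Fin k × Fin k => a q.1 + u * a q.2 = t), p q.2 ^ 2 :=
    Finset.sum_image (fun q hq q' hq' h =>
      snd_injOn ha hu t (Finset.mem_coe.2 hq) (Finset.mem_coe.2 hq') h)
  rw [← himg]
  exact Finset.sum_le_sum_of_subset_of_nonneg (subset_univ _) (fun i _ _ => sq_nonneg _)

lemma QQ_le {k : ℕ} {a p : Fin k → ℝ} (ha : Function.Injective a) {u : ℝ} (hu : u ≠ 0)
    (t : ℝ) : QQ a p u t ≤ ∑ i, p i ^ 2 := by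
  have h1 : QQ a p u t ≤
      ∑ q ∈ univ.filter (fun q : Fin k × Fin k => a q.1 + u * a q.2 = t),
        (p q.1 ^ 2 + p q.2 ^ 2) / 2 := by
    apply Finset.sum_le_sum
    intro q _
    nlinarith [sq_nonneg (p q.1 - p q.2)]
  have h2 := sum_fst_sq_le (p := p) ha hu t
  have h3 := sum_snd_sq_le (p := p) ha hu t
  have hsplit : ∑ q ∈ univ.filter (fun q : Fin k × Fin k => a q.1 + u * a q.2 = t),
      (p q.1 ^ 2 + p q.2 ^ 2) / 2
      = (∑ q ∈ univ.filter (fun q : Fin k × Fin k => a q.1 + u * a q.2 = t), p q.1 ^ 2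
        + ∑ q ∈ univ.filter (fun q : Fin k × Fin k => a q.1 + u * a q.2 = t), p q.2 ^ 2) / 2 := by
    rw [← Finset.sum_add_distrib, Finset.sum_div]
  linarith

lemma QQ_eq {k : ℕ} {a p : Fin k → ℝ} (ha : Function.Injective a) (hp : ∀ i, 0 < p i)
    {u : ℝ} (hu : u ≠ 0) {t : ℝ} (hQ : QQ a p u t = ∑ i, p i ^ 2) :
    (k : ℝ) * t = (1 + u) * ∑ i, a i := by
  classical
  set F := univ.filter (fun q : Fin k × Fin k => a q.1 + u * a q.2 = t) with hF
  set T := ∑ i, p i ^ 2 with hT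
  have h1 : QQ a p u t ≤ ∑ q ∈ F, (p q.1 ^ 2 + p q.2 ^ 2) / 2 := by
    apply Finset.sum_le_sum; intro q _; nlinarith [sq_nonneg (p q.1 - p q.2)]
  have h2 := sum_fst_sq_le (p := p) ha hu t
  have h3 := sum_snd_sq_le (p := p) ha hu t
  have hsplit : ∑ q ∈ F, (p q.1 ^ 2 + p q.2 ^ 2) / 2
      = (∑ q ∈ F, p q.1 ^ 2 + ∑ q ∈ F, p q.2 ^ 2) / 2 := by
    rw [← Finset.sum_add_distrib, Finset.sum_div]
  -- both image sums equal T
  have hS1 : ∑ q ∈ F, p q.1 ^ 2 = T := by rw [hsplit] at h1; linarith [hQ]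
  have hS2 : ∑ q ∈ F, p q.2 ^ 2 = T := by rw [hsplit] at h1; linarith [hQ]
  -- images are univ
  have himg1 : F.image Prod.fst = univ := by
    by_contra hne
    obtain ⟨j, hj⟩ : ∃ j, j ∉ F.image Prod.fst := by
      by_contra h; push_neg at h; exact hne (Finset.eq_univ_iff_forall.2 h)
    have hlt : ∑ i ∈ F.image Prod.fst, p i ^ 2 < ∑ i, p i ^ 2 :=
      Finset.sum_lt_sum_of_subset (subset_univ _) (mem_univ j) hj
        (pow_pos (hp j) 2) (fun i _ _ => sq_nonneg _)
    rw [Finset.sum_image (fun q hq q' hq' h =>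
      fst_injOn ha hu t (Finset.mem_coe.2 hq) (Finset.mem_coe.2 hq') h)] at hlt
    rw [hS1] at hlt; exact lt_irrefl _ hlt
  have himg2 : F.image Prod.snd = univ := by
    by_contra hne
    obtain ⟨j, hj⟩ : ∃ j, j ∉ F.image Prod.snd := by
      by_contra h; push_neg at h; exact hne (Finset.eq_univ_iff_forall.2 h)
    have hlt : ∑ i ∈ F.image Prod.snd, p i ^ 2 < ∑ i, p i ^ 2 :=
      Finset.sum_lt_sum_of_subset (subset_univ _) (mem_univ j) hj
        (pow_pos (hp j) 2) (fun i _ _ => sq_nonneg _)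
    rw [Finset.sum_image (fun q hq q' hq' h =>
      snd_injOn ha hu t (Finset.mem_coe.2 hq) (Finset.mem_coe.2 hq') h)] at hlt
    rw [hS2] at hlt; exact lt_irrefl _ hlt
  have hcard : F.card = k := by
    have := Finset.card_image_of_injOn
      (f := Prod.fst) (s := F)
      (fun q hq q' hq' h => fst_injOn ha hu t (Finset.mem_coe.2 hq) (Finset.mem_coe.2 hq') h)
    rw [himg1, Finset.card_univ, Fintype.card_fin] at this
    omega
  have hsa1 : ∑ q ∈ F, a q.1 = ∑ i, a i := by
    rw [← himg1]
    rw [Finset.sum_image (fun q hq q' hq' h =>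
      fst_injOn ha hu t (Finset.mem_coe.2 hq) (Finset.mem_coe.2 hq') h)]
  have hsa2 : ∑ q ∈ F, a q.2 = ∑ i, a i := by
    rw [← himg2]
    rw [Finset.sum_image (fun q hq q' hq' h =>
      snd_injOn ha hu t (Finset.mem_coe.2 hq) (Finset.mem_coe.2 hq') h)]
  have hkey : ∑ q ∈ F, (a q.1 + u * a q.2) = (k : ℝ) * t := by
    rw [Finset.sum_congr rfl (fun q hq => (Finset.mem_filter.1 hq).2)]
    rw [Finset.sum_const, hcard, nsmul_eq_mul]
  rw [Finset.sum_add_distrib, ← Finset.mul_sum, hsa1, hsa2] at hkey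
  linarith

lemma gap_lemma {k : ℕ} {a p : Fin k → ℝ} (hk : 2 ≤ k) (ha : Function.Injective a)
    (hp : ∀ i, 0 < p i) {u : ℝ} (hu : u ≠ 0) :
    ∃ ε > 0, ∀ t : ℝ, t ≠ (1 + u) * (∑ i, a i) / k →
      QQ a p u t ≤ (∑ i, p i ^ 2) - ε := by
  have hk0 : (0 : ℝ) < k := by
    have : 0 < k := by omega
    exact_mod_cast this
  have hne : (Finset.univ : Finset (Fin k)).Nonempty := by
    refine ⟨⟨0, by omega⟩, mem_univ _⟩
  set T := ∑ i, p i ^ 2 with hT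
  have hT0 : 0 < T := Finset.sum_pos (fun i _ => pow_pos (hp i) 2) hne
  set tstar := (1 + u) * (∑ i, a i) / k with htstar
  set V : Finset ℝ := univ.image (fun q : Fin k × Fin k => a q.1 + u * a q.2) with hV
  set W : Finset ℝ := insert T ((V.erase tstar).image (fun t => T - QQ a p u t)) with hW
  have hWne : W.Nonempty := ⟨T, Finset.mem_insert_self _ _⟩
  have hWpos : ∀ x ∈ W, 0 < x := by
    intro x hx
    rcases Finset.mem_insert.1 hx with h | h
    · rw [h]; exact hT0
    · obtain ⟨t, ht, rfl⟩ := Finset.mem_image.1 h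
      obtain ⟨htne, -⟩ := Finset.mem_erase.1 ht
      have hle := QQ_le (p := p) ha hu t
      rcases lt_or_eq_of_le hle with hlt | heq
      · linarith
      · exfalso
        have := QQ_eq ha hp hu heq
        apply htne
        rw [htstar]
        field_simp
        linarith
  refine ⟨W.min' hWne, hWpos _ (W.min'_mem hWne), ?_⟩
  intro t ht
  by_cases hmem : t ∈ V
  · have hWin : T - QQ a p u t ∈ W := by
      apply Finset.mem_insert_of_mem
      exact Finset.mem_image.2 ⟨t, Finset.mem_erase.2 ⟨ht, hmem⟩, rfl⟩
    have := W.min'_le _ hWin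
    linarith
  · have hQ0 : QQ a p u t = 0 := by
      rw [QQ]
      apply Finset.sum_eq_zero
      intro q hq
      exfalso
      exact hmem (Finset.mem_image.2 ⟨q, mem_univ _, (Finset.mem_filter.1 hq).2⟩)
    have := W.min'_le _ (Finset.mem_insert_self T _)
    rw [hQ0]
    linarith

lemma comb_lemma {k : ℕ} {a p : Fin k → ℝ} (hk : 2 ≤ k) (ha : Function.Injective a)
    (hp : ∀ i, 0 < p i) (hsum : ∑ i, p i = 1) :
    ∃ c > 0, ∀ u : ℝ, (u = 1 ∨ u = -1) → ∀ s : ℝ,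
      ∑ v ∈ univ.filter
        (fun v : Fin k × Fin k × Fin k => a v.1 + a v.2.1 + u * a v.2.2 = s),
          p v.1 * p v.2.1 * p v.2.2 ≤ (∑ i, p i ^ 2) - c := by
  obtain ⟨ε₁, hε₁, hgap₁⟩ := gap_lemma hk ha hp (u := 1) one_ne_zero
  obtain ⟨ε₂, hε₂, hgap₂⟩ := gap_lemma hk ha hp (u := -1) (by norm_num)
  set i0 : Fin k := ⟨0, by omega⟩ with hi0
  set i1 : Fin k := ⟨1, by omega⟩ with hi1
  have hi01 : i0 ≠ i1 := by simp [hi0, hi1, Fin.ext_iff]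
  have ha01 : a i0 ≠ a i1 := fun h => hi01 (ha h)
  set T := ∑ i, p i ^ 2 with hT
  refine ⟨min (p i0) (p i1) * min ε₁ ε₂,
    mul_pos (lt_min (hp i0) (hp i1)) (lt_min hε₁ hε₂), ?_⟩
  intro u hu s
  -- the identity: group the triple sum by the first coordinate
  have hid : ∑ v ∈ univ.filter
        (fun v : Fin k × Fin k × Fin k => a v.1 + a v.2.1 + u * a v.2.2 = s),
          p v.1 * p v.2.1 * p v.2.2 = ∑ i, p i * QQ a p u (s - a i) := by
    rw [Finset.sum_filter, Fintype.sum_prod_type]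
    apply Finset.sum_congr rfl
    intro i _
    rw [QQ, Finset.sum_filter, Finset.mul_sum]
    apply Finset.sum_congr rfl
    intro q _
    by_cases h : a q.1 + u * a q.2 = s - a i
    · rw [if_pos h, if_pos (by dsimp only; linarith), mul_assoc]
    · rw [if_neg h, if_neg (by dsimp only; intro hc; exact h (by linarith)), mul_zero]
  rw [hid]
  -- pick the gap point
  have hgap : ∀ t : ℝ, t ≠ (1 + u) * (∑ i, a i) / k → QQ a p u t ≤ T - min ε₁ ε₂ := by
    intro t ht
    rcases hu with rfl | rfl
    · have := hgap₁ t ht; have := min_le_left ε₁ ε₂; linarith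
    · have := hgap₂ t ht; have := min_le_right ε₁ ε₂; linarith
  set tstar := (1 + u) * (∑ i, a i) / k with htstar
  obtain ⟨i', hi'mem, hi'⟩ : ∃ i', (i' = i0 ∨ i' = i1) ∧ s - a i' ≠ tstar := by
    by_cases h : s - a i0 = tstar
    · exact ⟨i1, Or.inr rfl, fun hc => ha01 (by rw [← h] at hc; linarith)⟩
    · exact ⟨i0, Or.inl rfl, h⟩
  have hu0 : u ≠ 0 := by rcases hu with rfl | rfl <;> norm_num
  -- bound
  have hterm : ∀ i, 0 ≤ p i * (T - QQ a p u (s - a i)) := by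
    intro i
    have := QQ_le (p := p) ha hu0 (s - a i)
    exact mul_nonneg (hp i).le (by linarith)
  have hsingle : p i' * (T - QQ a p u (s - a i')) ≤ ∑ i, p i * (T - QQ a p u (s - a i)) :=
    Finset.single_le_sum (fun i _ => hterm i) (mem_univ i')
  have hlow : min (p i0) (p i1) * min ε₁ ε₂ ≤ p i' * (T - QQ a p u (s - a i')) := by
    have h1 : min ε₁ ε₂ ≤ T - QQ a p u (s - a i') := by
      have := hgap _ hi'; linarith
    have h2 : min (p i0) (p i1) ≤ p i' := by
      rcases hi'mem with rfl | rfl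
      · exact min_le_left _ _
      · exact min_le_right _ _
    exact mul_le_mul h2 h1 (le_of_lt (lt_min hε₁ hε₂)) (hp i').le
  have hexpand : ∑ i, p i * QQ a p u (s - a i)
      = T - ∑ i, p i * (T - QQ a p u (s - a i)) := by
    have : ∑ i, p i * (T - QQ a p u (s - a i))
        = (∑ i, p i * T) - ∑ i, p i * QQ a p u (s - a i) := by
      rw [← Finset.sum_sub_distrib]
      apply Finset.sum_congr rfl
      intro i _; ring
    rw [this, ← Finset.sum_mul, hsum, one_mul]
    ring
  rw [hexpand]
  linarith

/-- For i.i.d. copies `ξ₁, ξ₂, ξ₃` of a discrete distribution with at least two atoms and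
either sign `u ∈ {1, -1}`, there is `c > 0` with
`P[ξ₁ + ξ₂ + u·ξ₃ = s] ≤ ‖p‖₂² - c` for all `s`. -/
theorem stmt_4 {Ω : Type*} [MeasurableSpace Ω] (μ : Measure Ω) [IsProbabilityMeasure μ]
    {k : ℕ} (hk : 2 ≤ k) (a : Fin k → ℝ) (ha : Function.Injective a)
    (p : Fin k → ℝ) (hp : ∀ i, 0 < p i) (hsum : ∑ i, p i = 1)
    (ξ₁ ξ₂ ξ₃ : Ω → ℝ) (hm₁ : Measurable ξ₁) (hm₂ : Measurable ξ₂) (hm₃ : Measurable ξ₃)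
    (hindep : iIndepFun ![ξ₁, ξ₂, ξ₃] μ)
    (hlaw₁ : ∀ i, μ {ω | ξ₁ ω = a i} = ENNReal.ofReal (p i))
    (hlaw₂ : ∀ i, μ {ω | ξ₂ ω = a i} = ENNReal.ofReal (p i))
    (hlaw₃ : ∀ i, μ {ω | ξ₃ ω = a i} = ENNReal.ofReal (p i))
    (hsupp₁ : μ {ω | ξ₁ ω ∈ Set.range a} = 1)
    (hsupp₂ : μ {ω | ξ₂ ω ∈ Set.range a} = 1)
    (hsupp₃ : μ {ω | ξ₃ ω ∈ Set.range a} = 1) :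
    ∃ c : ℝ, 0 < c ∧
      ∀ u : ℝ, (u = 1 ∨ u = -1) →
      ∀ s : ℝ, μ {ω | ξ₁ ω + ξ₂ ω + u * ξ₃ ω = s} ≤
        ENNReal.ofReal ((∑ i, (p i) ^ 2) - c) := by
  obtain ⟨c, hc, hcomb⟩ := comb_lemma hk ha hp hsum
  refine ⟨c, hc, ?_⟩
  intro u hu s
  -- product formula from independence
  have hprod : ∀ i j l : Fin k,
      μ ({ω | ξ₁ ω = a i} ∩ {ω | ξ₂ ω = a j} ∩ {ω | ξ₃ ω = a l})
        = ENNReal.ofReal (p i * p j * p l) := by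
    intro i j l
    have h := hindep.measure_inter_preimage_eq_mul (S := Finset.univ)
      (sets := ![{a i}, {a j}, {a l}])
      (fun m _ => by fin_cases m <;> exact measurableSet_singleton _)
    simp only [Fin.prod_univ_three] at h
    have hI : ⋂ m ∈ (Finset.univ : Finset (Fin 3)),
        (![ξ₁, ξ₂, ξ₃] m) ⁻¹' (![{a i}, {a j}, {a l}] m)
        = ({ω | ξ₁ ω = a i} ∩ {ω | ξ₂ ω = a j} ∩ {ω | ξ₃ ω = a l}) := by
      ext ω
      simp [Fin.forall_fin_succ, and_assoc]
    rw [hI] at h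
    rw [h]
    simp only [Matrix.cons_val_zero, Matrix.cons_val_one, Matrix.head_cons,
      Matrix.cons_val_two, Matrix.tail_cons]
    have e1 : ξ₁ ⁻¹' {a i} = {ω | ξ₁ ω = a i} := rfl
    have e2 : ξ₂ ⁻¹' {a j} = {ω | ξ₂ ω = a j} := rfl
    have e3 : ξ₃ ⁻¹' {a l} = {ω | ξ₃ ω = a l} := rfl
    rw [e1, e2, e3, hlaw₁, hlaw₂, hlaw₃,
      ← ENNReal.ofReal_mul (hp i).le, ← ENNReal.ofReal_mul (mul_nonneg (hp i).le (hp j).le)]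
  -- null complements of the supports
  have hmR : MeasurableSet (Set.range a) := (Set.finite_range a).measurableSet
  have hN₁ : μ {ω | ξ₁ ω ∈ Set.range a}ᶜ = 0 := by
    rw [show {ω | ξ₁ ω ∈ Set.range a} = ξ₁ ⁻¹' Set.range a from rfl,
      measure_compl (hm₁ hmR) (measure_ne_top μ _), measure_univ,
      show ξ₁ ⁻¹' Set.range a = {ω | ξ₁ ω ∈ Set.range a} from rfl, hsupp₁, tsub_self]
  have hN₂ : μ {ω | ξ₂ ω ∈ Set.range a}ᶜ = 0 := by
    rw [show {ω | ξ₂ ω ∈ Set.range a} = ξ₂ ⁻¹' Set.range a from rfl,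
      measure_compl (hm₂ hmR) (measure_ne_top μ _), measure_univ,
      show ξ₂ ⁻¹' Set.range a = {ω | ξ₂ ω ∈ Set.range a} from rfl, hsupp₂, tsub_self]
  have hN₃ : μ {ω | ξ₃ ω ∈ Set.range a}ᶜ = 0 := by
    rw [show {ω | ξ₃ ω ∈ Set.range a} = ξ₃ ⁻¹' Set.range a from rfl,
      measure_compl (hm₃ hmR) (measure_ne_top μ _), measure_univ,
      show ξ₃ ⁻¹' Set.range a = {ω | ξ₃ ω ∈ Set.range a} from rfl, hsupp₃, tsub_self]
  set Sfin := univ.filter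
    (fun v : Fin k × Fin k × Fin k => a v.1 + a v.2.1 + u * a v.2.2 = s) with hSfin
  -- the cover
  have hcover : {ω | ξ₁ ω + ξ₂ ω + u * ξ₃ ω = s} ⊆
      (⋃ v ∈ Sfin, ({ω | ξ₁ ω = a v.1} ∩ {ω | ξ₂ ω = a v.2.1} ∩ {ω | ξ₃ ω = a v.2.2}))
      ∪ ({ω | ξ₁ ω ∈ Set.range a}ᶜ ∪ {ω | ξ₂ ω ∈ Set.range a}ᶜ
          ∪ {ω | ξ₃ ω ∈ Set.range a}ᶜ) := by
    intro ω hω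
    by_cases h1 : ξ₁ ω ∈ Set.range a
    · by_cases h2 : ξ₂ ω ∈ Set.range a
      · by_cases h3 : ξ₃ ω ∈ Set.range a
        · apply Set.mem_union_left
          obtain ⟨i, hi⟩ := h1
          obtain ⟨j, hj⟩ := h2
          obtain ⟨l, hl⟩ := h3
          have hvmem : (i, j, l) ∈ Sfin := by
            rw [hSfin, Finset.mem_filter]
            refine ⟨mem_univ _, ?_⟩
            have : ξ₁ ω + ξ₂ ω + u * ξ₃ ω = s := hω
            dsimp only
            rw [hi, hj, hl]
            exact this
          exact Set.mem_biUnion hvmem ⟨⟨hi.symm, hj.symm⟩, hl.symm⟩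
        · exact Set.mem_union_right _ (Set.mem_union_right _ h3)
      · exact Set.mem_union_right _ (Set.mem_union_left _ (Set.mem_union_right _ h2))
    · exact Set.mem_union_right _ (Set.mem_union_left _ (Set.mem_union_left _ h1))
  calc μ {ω | ξ₁ ω + ξ₂ ω + u * ξ₃ ω = s}
      ≤ μ ((⋃ v ∈ Sfin, ({ω | ξ₁ ω = a v.1} ∩ {ω | ξ₂ ω = a v.2.1}
              ∩ {ω | ξ₃ ω = a v.2.2}))
          ∪ ({ω | ξ₁ ω ∈ Set.range a}ᶜ ∪ {ω | ξ₂ ω ∈ Set.range a}ᶜ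
              ∪ {ω | ξ₃ ω ∈ Set.range a}ᶜ)) := measure_mono hcover
    _ ≤ μ (⋃ v ∈ Sfin, ({ω | ξ₁ ω = a v.1} ∩ {ω | ξ₂ ω = a v.2.1}
              ∩ {ω | ξ₃ ω = a v.2.2}))
          + μ ({ω | ξ₁ ω ∈ Set.range a}ᶜ ∪ {ω | ξ₂ ω ∈ Set.range a}ᶜ
              ∪ {ω | ξ₃ ω ∈ Set.range a}ᶜ) := measure_union_le _ _
    _ = μ (⋃ v ∈ Sfin, ({ω | ξ₁ ω = a v.1} ∩ {ω | ξ₂ ω = a v.2.1}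
              ∩ {ω | ξ₃ ω = a v.2.2})) := by
        have : μ ({ω | ξ₁ ω ∈ Set.range a}ᶜ ∪ {ω | ξ₂ ω ∈ Set.range a}ᶜ
            ∪ {ω | ξ₃ ω ∈ Set.range a}ᶜ) = 0 := by
          exact measure_union_null (measure_union_null hN₁ hN₂) hN₃
        rw [this, add_zero]
    _ ≤ ∑ v ∈ Sfin, μ ({ω | ξ₁ ω = a v.1} ∩ {ω | ξ₂ ω = a v.2.1}
          ∩ {ω | ξ₃ ω = a v.2.2}) := measure_biUnion_finset_le _ _
    _ = ∑ v ∈ Sfin, ENNReal.ofReal (p v.1 * p v.2.1 * p v.2.2) := by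
        exact Finset.sum_congr rfl fun v _ => hprod v.1 v.2.1 v.2.2
    _ = ENNReal.ofReal (∑ v ∈ Sfin, p v.1 * p v.2.1 * p v.2.2) := by
        rw [ENNReal.ofReal_sum_of_nonneg]
        intro v _
        exact mul_nonneg (mul_nonneg (hp _).le (hp _).le) (hp _).le
    _ ≤ ENNReal.ofReal ((∑ i, (p i) ^ 2) - c) :=
        ENNReal.ofReal_le_ofReal (hcomb u hu s)
end

section
/- Tensorization, small-ball version: if χ₁,…,χ_m are independent real random variables such that P[|χ_i| ≤ ε] ≤ Kε for all ε ≥ ε₀ and all i, then for all ε ≥ ε₀, P[‖(χ₁,…,χ_m)‖₂ ≤ ε√m] ≤ (CKε)^m for an absolute constant C. -/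
open MeasureTheory ProbabilityTheory Finset
open scoped ENNReal NNReal

-- value of the geometric-type series
lemma aux_tsum_val : ∑' n : ℕ, ((n : ℝ) + 1) * (2⁻¹ : ℝ) ^ n = 4 := by
  have hr : ‖(2⁻¹ : ℝ)‖ < 1 := by rw [Real.norm_eq_abs, abs_of_nonneg] <;> norm_num
  have h1 : ∑' n : ℕ, (n : ℝ) * (2⁻¹ : ℝ) ^ n = 2⁻¹ / (1 - 2⁻¹) ^ 2 :=
    tsum_coe_mul_geometric_of_norm_lt_one hr
  have h2 : ∑' n : ℕ, (2⁻¹ : ℝ) ^ n = (1 - 2⁻¹)⁻¹ :=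
    tsum_geometric_of_lt_one (by norm_num) (by norm_num)
  have hs1 : Summable (fun n : ℕ => (n : ℝ) * (2⁻¹ : ℝ) ^ n) := by
    simpa using summable_pow_mul_geometric_of_norm_lt_one 1 hr
  have hs2 : Summable (fun n : ℕ => (2⁻¹ : ℝ) ^ n) := summable_geometric_of_lt_one (by norm_num) (by norm_num)
  have : ∑' n : ℕ, ((n : ℝ) + 1) * (2⁻¹ : ℝ) ^ n
      = (∑' n : ℕ, (n : ℝ) * (2⁻¹ : ℝ) ^ n) + ∑' n : ℕ, (2⁻¹ : ℝ) ^ n := by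
    rw [← Summable.tsum_add hs1 hs2]
    congr 1; ext n; ring
  rw [this, h1, h2]; norm_num

lemma aux_tsum_ennreal : ∑' n : ℕ, ((n : ℝ≥0∞) + 1) * 2⁻¹ ^ n = 4 := by
  have key : ∀ n : ℕ, ((n : ℝ≥0∞) + 1) * 2⁻¹ ^ n = ENNReal.ofReal (((n : ℝ) + 1) * (2⁻¹ : ℝ) ^ n) := by
    intro n
    rw [ENNReal.ofReal_mul (by positivity), ENNReal.ofReal_pow (by norm_num),
      ENNReal.ofReal_add n.cast_nonneg zero_le_one, ENNReal.ofReal_natCast, ENNReal.ofReal_one]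
    rw [show ((2:ℝ)⁻¹) = (2:ℝ)⁻¹ from rfl, ENNReal.ofReal_inv_of_pos (by norm_num), ENNReal.ofReal_ofNat]
  simp_rw [key]
  rw [← ENNReal.ofReal_tsum_of_nonneg (fun n => by positivity)]
  · rw [aux_tsum_val]; norm_num [ENNReal.ofReal_ofNat]
  · have hr : ‖(2⁻¹ : ℝ)‖ < 1 := by rw [Real.norm_eq_abs, abs_of_nonneg] <;> norm_num
    have hs1 : Summable (fun n : ℕ => (n : ℝ) * (2⁻¹ : ℝ) ^ n) := by
      simpa using summable_pow_mul_geometric_of_norm_lt_one 1 hr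
    have hs2 : Summable (fun n : ℕ => (2⁻¹ : ℝ) ^ n) :=
      summable_geometric_of_lt_one (by norm_num) (by norm_num)
    have := hs1.add hs2
    apply this.congr
    intro n; ring

lemma aux_factor {Ω : Type} [MeasurableSpace Ω] (μ : Measure Ω) [IsProbabilityMeasure μ]
    (X : Ω → ℝ) (hX : Measurable X) (K ε₀ ε : ℝ) (hK : 0 < K)
    (hsmall : ∀ ε' : ℝ, ε₀ ≤ ε' → μ {ω | |X ω| ≤ ε'} ≤ ENNReal.ofReal (K * ε'))
    (hε : ε₀ ≤ ε) (hεpos : 0 < ε) :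
    ∫⁻ ω, ENNReal.ofReal (Real.exp (-((X ω) ^ 2 / ε ^ 2))) ∂μ ≤ ENNReal.ofReal (4 * (K * ε)) := by
  set S : ℕ → Set Ω := fun n => {ω | |X ω| ≤ ε * Real.sqrt (n + 1)} with hS
  have hSm : ∀ n, MeasurableSet (S n) := fun n => measurableSet_le hX.abs measurable_const
  have hpt : ∀ ω, ENNReal.ofReal (Real.exp (-((X ω) ^ 2 / ε ^ 2)))
      ≤ ∑' n : ℕ, (S n).indicator (fun _ => (2⁻¹ : ℝ≥0∞) ^ n) ω := by
    intro ω
    set u : ℝ := (X ω) ^ 2 / ε ^ 2 with hu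
    have hu0 : 0 ≤ u := by positivity
    set n := ⌊u⌋₊ with hn
    have hmem : ω ∈ S n := by
      have h1 : u < (n : ℝ) + 1 := Nat.lt_floor_add_one u
      have h2 : (X ω) ^ 2 ≤ ε ^ 2 * ((n : ℝ) + 1) := by
        have := (div_le_iff₀ (by positivity : (0:ℝ) < ε ^ 2)).mp h1.le
        linarith [this]
      have h3 : |X ω| ≤ ε * Real.sqrt ((n : ℝ) + 1) := by
        have := Real.sqrt_le_sqrt h2
        rwa [Real.sqrt_sq_eq_abs, Real.sqrt_mul (sq_nonneg ε), Real.sqrt_sq hεpos.le] at this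
      exact h3
    have hterm : ENNReal.ofReal (Real.exp (-u)) ≤ (2⁻¹ : ℝ≥0∞) ^ n := by
      have h1 : Real.exp (-u) ≤ Real.exp (-(n : ℝ)) :=
        Real.exp_le_exp.mpr (by simpa using Nat.floor_le hu0)
      have h2 : Real.exp (-(n : ℝ)) ≤ (2⁻¹ : ℝ) ^ n := by
        have he : (2 : ℝ) ≤ Real.exp 1 := by
          have := Real.exp_one_gt_d9; linarith
        have hrw : (Real.exp 1)⁻¹ ^ n = Real.exp (-(n : ℝ)) := by
          rw [← Real.exp_neg, ← Real.exp_nat_mul]; norm_num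
        rw [← hrw]
        exact pow_le_pow_left₀ (by positivity) (by
          apply inv_anti₀ <;> norm_num [he]) n
      calc ENNReal.ofReal (Real.exp (-u)) ≤ ENNReal.ofReal ((2⁻¹ : ℝ) ^ n) :=
            ENNReal.ofReal_le_ofReal (h1.trans h2)
        _ = (2⁻¹ : ℝ≥0∞) ^ n := by
            rw [ENNReal.ofReal_pow (by norm_num), ENNReal.ofReal_inv_of_pos (by norm_num),
              ENNReal.ofReal_ofNat]
    calc ENNReal.ofReal (Real.exp (-u)) ≤ (S n).indicator (fun _ => (2⁻¹ : ℝ≥0∞) ^ n) ω := by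
          rw [Set.indicator_of_mem hmem]; exact hterm
      _ ≤ ∑' k : ℕ, (S k).indicator (fun _ => (2⁻¹ : ℝ≥0∞) ^ k) ω :=
          ENNReal.le_tsum n
  calc ∫⁻ ω, ENNReal.ofReal (Real.exp (-((X ω) ^ 2 / ε ^ 2))) ∂μ
      ≤ ∫⁻ ω, ∑' n : ℕ, (S n).indicator (fun _ => (2⁻¹ : ℝ≥0∞) ^ n) ω ∂μ :=
        lintegral_mono hpt
    _ = ∑' n : ℕ, ∫⁻ ω, (S n).indicator (fun _ => (2⁻¹ : ℝ≥0∞) ^ n) ω ∂μ :=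
        lintegral_tsum (fun n => (measurable_const.indicator (hSm n)).aemeasurable)
    _ = ∑' n : ℕ, (2⁻¹ : ℝ≥0∞) ^ n * μ (S n) := by
        congr 1; ext n; exact lintegral_indicator_const (hSm n) _
    _ ≤ ∑' n : ℕ, (2⁻¹ : ℝ≥0∞) ^ n * (ENNReal.ofReal (K * ε) * ((n : ℝ≥0∞) + 1)) := by
        apply ENNReal.tsum_le_tsum
        intro n
        apply mul_le_mul_right
        have hsq := Real.sq_sqrt (by positivity : (0:ℝ) ≤ (n : ℝ) + 1)
        have hsn := Real.sqrt_nonneg ((n : ℝ) + 1)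
        have hsqrt1 : (1 : ℝ) ≤ Real.sqrt ((n : ℝ) + 1) := by nlinarith [show (0:ℝ) ≤ (n:ℝ) from Nat.cast_nonneg n]
        have hε' : ε₀ ≤ ε * Real.sqrt ((n : ℝ) + 1) :=
          hε.trans (le_mul_of_one_le_right hεpos.le hsqrt1)
        calc μ (S n) ≤ ENNReal.ofReal (K * (ε * Real.sqrt ((n : ℝ) + 1))) := hsmall _ hε'
          _ ≤ ENNReal.ofReal (K * ε * ((n : ℝ) + 1)) := by
              apply ENNReal.ofReal_le_ofReal
              have hs : Real.sqrt ((n : ℝ) + 1) ≤ (n : ℝ) + 1 := by nlinarith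
              have := mul_le_mul_of_nonneg_left hs (mul_nonneg hK.le hεpos.le)
              nlinarith
          _ = ENNReal.ofReal (K * ε) * ((n : ℝ≥0∞) + 1) := by
              rw [ENNReal.ofReal_mul (by positivity), ENNReal.ofReal_add n.cast_nonneg zero_le_one,
                ENNReal.ofReal_natCast, ENNReal.ofReal_one]
    _ = ENNReal.ofReal (K * ε) * ∑' n : ℕ, ((n : ℝ≥0∞) + 1) * (2⁻¹ : ℝ≥0∞) ^ n := by
        rw [← ENNReal.tsum_mul_left]
        congr 1; ext n; ring
    _ = ENNReal.ofReal (K * ε) * 4 := by rw [aux_tsum_ennreal]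
    _ = ENNReal.ofReal (4 * (K * ε)) := by
        rw [ENNReal.ofReal_mul (by norm_num : (0:ℝ) ≤ 4), ENNReal.ofReal_ofNat]; ring

/-- Tensorization, small-ball version: there is an absolute constant `C` such that if
`χ₁,…,χ_m` are independent with `P[|χᵢ| ≤ ε] ≤ Kε` for all `ε ≥ ε₀`, then for `ε ≥ ε₀`,
`P[‖(χ₁,…,χ_m)‖₂ ≤ ε√m] ≤ (CKε)^m`. -/
theorem stmt_5 :
    ∃ C : ℝ, 0 < C ∧
      ∀ (m : ℕ) (Ω : Type) (_ : MeasurableSpace Ω) (μ : Measure Ω),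
        IsProbabilityMeasure μ →
        ∀ (χ : Fin m → Ω → ℝ), (∀ i, Measurable (χ i)) →
        iIndepFun χ μ →
        ∀ (K ε₀ : ℝ), 0 < K → 0 ≤ ε₀ →
        (∀ i, ∀ ε : ℝ, ε₀ ≤ ε → μ {ω | |χ i ω| ≤ ε} ≤ ENNReal.ofReal (K * ε)) →
        ∀ ε : ℝ, ε₀ ≤ ε →
          μ {ω | Real.sqrt (∑ i, (χ i ω) ^ 2) ≤ ε * Real.sqrt m} ≤
            ENNReal.ofReal ((C * K * ε) ^ m) := by
  refine ⟨11, by norm_num, ?_⟩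
  intro m Ω _ μ hprob χ hmeas hind K ε₀ hK hε₀ hsmall ε hε
  have hε0 : (0 : ℝ) ≤ ε := hε₀.trans hε
  rcases eq_or_lt_of_le hε0 with hεz | hεpos
  · -- degenerate case ε = 0
    rcases Nat.eq_zero_or_pos m with hm | hm
    · subst hm
      simp only [pow_zero, ENNReal.ofReal_one]
      exact prob_le_one
    · have hi0 : (⟨0, hm⟩ : Fin m) = ⟨0, hm⟩ := rfl
      set i0 : Fin m := ⟨0, hm⟩
      have hsub : {ω | Real.sqrt (∑ i, (χ i ω) ^ 2) ≤ ε * Real.sqrt m} ⊆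
          {ω | |χ i0 ω| ≤ ε} := by
        intro ω hω
        simp only [Set.mem_setOf_eq] at hω ⊢
        have h0 : (0 : ℝ) ≤ ∑ i, (χ i ω) ^ 2 := Finset.sum_nonneg fun i _ => sq_nonneg _
        have hsum : ∑ i, (χ i ω) ^ 2 ≤ 0 := by
          have h1 : Real.sqrt (∑ i, (χ i ω) ^ 2) ≤ 0 := by
            rw [← hεz] at hω; simpa using hω
          nlinarith [Real.sq_sqrt h0, Real.sqrt_nonneg (∑ i, (χ i ω) ^ 2)]
        have hterm : (χ i0 ω) ^ 2 ≤ 0 := by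
          have h4 : (χ i0 ω) ^ 2 ≤ ∑ i, (χ i ω) ^ 2 := by
            simpa using Finset.single_le_sum (f := fun i => (χ i ω) ^ 2)
              (fun i _ => sq_nonneg _) (Finset.mem_univ i0)
          linarith
        have : χ i0 ω = 0 := by nlinarith [sq_nonneg (χ i0 ω)]
        rw [this, abs_zero, ← hεz]
      calc μ {ω | Real.sqrt (∑ i, (χ i ω) ^ 2) ≤ ε * Real.sqrt m}
          ≤ μ {ω | |χ i0 ω| ≤ ε} := measure_mono hsub
        _ ≤ ENNReal.ofReal (K * ε) := hsmall i0 ε hε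
        _ ≤ ENNReal.ofReal ((11 * K * ε) ^ m) := by
            rw [← hεz]; simp [zero_pow hm.ne']
  · -- main case 0 < ε
    set Y : Fin m → Ω → ℝ := fun i ω => -((χ i ω) ^ 2 / ε ^ 2) with hY
    have hYmeas : ∀ i, Measurable (Y i) := fun i =>
      (((hmeas i).pow_const 2).div_const _).neg
    have hindY : iIndepFun Y μ :=
      hind.comp (fun _ => fun x : ℝ => -(x ^ 2 / ε ^ 2))
        (fun _ => ((measurable_id.pow_const 2).div_const _).neg)
    set g : Ω → ℝ := fun ω => Real.exp (∑ i, Y i ω) with hg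
    have hg_nonneg : ∀ ω, 0 ≤ g ω := fun ω => (Real.exp_pos _).le
    have hYint : ∀ i ∈ Finset.univ, Integrable (fun ω => Real.exp (1 * Y i ω)) μ := by
      intro i _
      refine (integrable_const (1 : ℝ)).mono'
        ((measurable_const.mul (hYmeas i)).exp.aestronglyMeasurable) ?_
      filter_upwards with ω
      rw [Real.norm_eq_abs, abs_of_pos (Real.exp_pos _)]
      apply Real.exp_le_one_iff.mpr
      have : (0:ℝ) ≤ (χ i ω) ^ 2 / ε ^ 2 := by positivity
      simp only [hY, one_mul]; linarith
    have hg_int : Integrable g μ := by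
      have h := hindY.integrable_exp_mul_sum (t := 1) hYmeas (s := Finset.univ) hYint
      simp only [one_mul, Finset.sum_apply] at h
      exact h
    -- Markov
    set A := {ω | Real.sqrt (∑ i, (χ i ω) ^ 2) ≤ ε * Real.sqrt m} with hA
    have hAsub : A ⊆ {ω | Real.exp (-(m : ℝ)) ≤ g ω} := by
      intro ω hω
      simp only [Set.mem_setOf_eq] at hω ⊢
      apply Real.exp_le_exp.mpr
      have h0 : (0 : ℝ) ≤ ∑ i, (χ i ω) ^ 2 := Finset.sum_nonneg fun i _ => sq_nonneg _
      have hsum : ∑ i, (χ i ω) ^ 2 ≤ ε ^ 2 * m := by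
        have h1 : (Real.sqrt (∑ i, (χ i ω) ^ 2)) ^ 2 ≤ (ε * Real.sqrt m) ^ 2 :=
          pow_le_pow_left₀ (Real.sqrt_nonneg _) hω 2
        rwa [Real.sq_sqrt h0, mul_pow,
          Real.sq_sqrt (show (0:ℝ) ≤ (m:ℝ) from Nat.cast_nonneg m)] at h1
      have hsumY : ∑ i, Y i ω = -((∑ i, (χ i ω) ^ 2) / ε ^ 2) := by
        simp only [hY, ← Finset.sum_div, Finset.sum_neg_distrib]
      rw [hsumY]
      rw [neg_le_neg_iff, div_le_iff₀ (by positivity : (0:ℝ) < ε ^ 2)]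
      linarith [hsum]
    have hmar : Real.exp (-(m : ℝ)) * (μ {ω | Real.exp (-(m : ℝ)) ≤ g ω}).toReal
        ≤ ∫ ω, g ω ∂μ :=
      mul_meas_ge_le_integral_of_nonneg (ae_of_all _ hg_nonneg) hg_int _
    have hμA : (μ A).toReal ≤ Real.exp (m : ℝ) * ∫ ω, g ω ∂μ := by
      have h1 : (μ A).toReal ≤ (μ {ω | Real.exp (-(m : ℝ)) ≤ g ω}).toReal :=
        ENNReal.toReal_mono (measure_ne_top μ _) (measure_mono hAsub)
      have h2 := hmar
      have h3 : Real.exp (-(m:ℝ)) * Real.exp ((m:ℝ)) = 1 := by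
        rw [← Real.exp_add]; simp
      nlinarith [Real.exp_pos (-(m:ℝ)), Real.exp_pos ((m:ℝ)),
        ENNReal.toReal_nonneg (a := μ A)]
    -- factorization
    have hfac : ∫ ω, g ω ∂μ = ∏ i, ∫ ω, Real.exp (Y i ω) ∂μ := by
      have := hindY.mgf_sum hYmeas Finset.univ (t := 1)
      simp only [mgf, one_mul, Finset.sum_apply] at this
      simpa [hg] using this
    -- per-factor bound
    have hfi : ∀ i : Fin m, ∫ ω, Real.exp (Y i ω) ∂μ ≤ 4 * (K * ε) := by
      intro i
      have hnn : ∀ᵐ ω ∂μ, (0:ℝ) ≤ Real.exp (Y i ω) :=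
        ae_of_all _ fun ω => (Real.exp_pos (Y i ω)).le
      rw [integral_eq_lintegral_of_nonneg_ae hnn ((hYmeas i).exp.aestronglyMeasurable)]
      have hle := aux_factor μ (χ i) (hmeas i) K ε₀ ε hK (hsmall i) hε hεpos
      have : ∫⁻ ω, ENNReal.ofReal (Real.exp (Y i ω)) ∂μ ≤ ENNReal.ofReal (4 * (K * ε)) := by
        simpa [hY] using hle
      calc (∫⁻ ω, ENNReal.ofReal (Real.exp (Y i ω)) ∂μ).toReal
          ≤ (ENNReal.ofReal (4 * (K * ε))).toReal :=
            ENNReal.toReal_mono ENNReal.ofReal_ne_top this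
        _ = 4 * (K * ε) := ENNReal.toReal_ofReal (by positivity)
    have hKε : (0:ℝ) ≤ K * ε := by positivity
    have hprod : ∏ i : Fin m, ∫ ω, Real.exp (Y i ω) ∂μ ≤ (4 * (K * ε)) ^ m := by
      calc ∏ i : Fin m, ∫ ω, Real.exp (Y i ω) ∂μ
          ≤ ∏ _i : Fin m, (4 * (K * ε)) :=
            Finset.prod_le_prod (fun i _ => integral_nonneg fun ω => (Real.exp_pos (Y i ω)).le)
              (fun i _ => hfi i)
        _ = (4 * (K * ε)) ^ m := by rw [Finset.prod_const, Finset.card_univ, Fintype.card_fin]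
    have hfinal : (μ A).toReal ≤ (11 * K * ε) ^ m := by
      have he1 : Real.exp 1 ≤ 2.7182818286 := (Real.exp_one_lt_d9).le
      have hexp : Real.exp (m : ℝ) = (Real.exp 1) ^ m := by
        rw [← Real.exp_nat_mul]; norm_num
      calc (μ A).toReal ≤ Real.exp (m : ℝ) * ∫ ω, g ω ∂μ := hμA
        _ ≤ Real.exp (m : ℝ) * (4 * (K * ε)) ^ m := by
            have := hfac ▸ hprod
            exact mul_le_mul_of_nonneg_left this (Real.exp_pos _).le
        _ = (Real.exp 1 * (4 * (K * ε))) ^ m := by rw [hexp, ← mul_pow]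
        _ ≤ (11 * K * ε) ^ m := by
            apply pow_le_pow_left₀ (by positivity)
            nlinarith [Real.exp_pos (1:ℝ)]
    rw [← ENNReal.ofReal_toReal (measure_ne_top μ A)]
    exact ENNReal.ofReal_le_ofReal hfinal
end

section
/- Tensorization, fixed-scale version: if χ₁,…,χ_m are independent real random variables with P[|χ_i| ≤ η] ≤ τ for all i, then for every ε ∈ (0,1], P[‖(χ₁,…,χ_m)‖₂ ≤ η√(εm)] ≤ (e/ε)^{εm} τ^{m−εm}. -/
open MeasureTheory ProbabilityTheory Finset

lemma pow_self_le_exp_mul_factorial (k : ℕ) : (k:ℝ)^k ≤ Real.exp k * k.factorial := by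
  have hf : (0:ℝ) < k.factorial := by exact_mod_cast k.factorial_pos
  have h1 : ((k:ℝ)^k / k.factorial) ≤ Real.exp k := by
    calc ((k:ℝ)^k / k.factorial) ≤ ∑ i ∈ range (k+1), (k:ℝ)^i / i.factorial :=
          Finset.single_le_sum (f := fun i => (k:ℝ)^i / i.factorial)
            (fun i _ => by positivity) (Finset.self_mem_range_succ k)
      _ ≤ Real.exp k := Real.sum_le_exp_of_nonneg (by positivity) _
  calc (k:ℝ)^k = ((k:ℝ)^k / k.factorial) * k.factorial := by field_simp
    _ ≤ Real.exp k * k.factorial := by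
        exact mul_le_mul_of_nonneg_right h1 hf.le

lemma choose_le_emk (m k : ℕ) (hk : 1 ≤ k) :
    (m.choose k : ℝ) ≤ (Real.exp 1 * m / k)^k := by
  have hkp : (0:ℝ) < k := by exact_mod_cast hk
  have hf : (0:ℝ) < k.factorial := by exact_mod_cast k.factorial_pos
  refine (Nat.choose_le_pow_div k m).trans ?_
  rw [div_pow, div_le_div_iff₀ hf (pow_pos hkp k), mul_pow, Real.exp_one_pow]
  calc (m:ℝ)^k * (k:ℝ)^k ≤ (m:ℝ)^k * (Real.exp k * k.factorial) :=
        mul_le_mul_of_nonneg_left (pow_self_le_exp_mul_factorial k) (by positivity)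
    _ = Real.exp k * (m:ℝ)^k * k.factorial := by ring

lemma emk_rpow_mono {x y M : ℝ} (hx : 0 < x) (hxy : x ≤ y) (hyM : y ≤ M) :
    (Real.exp 1 * M / x) ^ x ≤ (Real.exp 1 * M / y) ^ y := by
  have hy : 0 < y := hx.trans_le hxy
  have hM : 0 < M := hy.trans_le hyM
  have heM : 0 < Real.exp 1 * M := by positivity
  set f : ℝ → ℝ := fun t => t * Real.log (Real.exp 1 * M) - t * Real.log t with hf
  have hmono : MonotoneOn f (Set.Icc x y) := by
    have hdiff : ∀ t ∈ Set.Ioo x y, HasDerivAt f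
        (1 * Real.log (Real.exp 1 * M) - (Real.log t + 1)) t := by
      intro t ht
      exact ((hasDerivAt_id t).mul_const _).sub
        (Real.hasDerivAt_mul_log (by linarith [ht.1] : t ≠ 0))
    apply monotoneOn_of_deriv_nonneg (convex_Icc x y)
    · apply ContinuousOn.sub (continuousOn_id.mul continuousOn_const)
      apply continuousOn_id.mul
      apply Real.continuousOn_log.mono
      intro t ht
      simp only [Set.mem_compl_iff, Set.mem_singleton_iff]
      have := ht.1
      intro h; rw [h] at this; linarith
    · rw [interior_Icc]
      intro t ht
      exact (hdiff t ht).differentiableAt.differentiableWithinAt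
    · rw [interior_Icc]
      intro t ht
      rw [(hdiff t ht).deriv]
      have h1 : Real.log (Real.exp 1 * M) = 1 + Real.log M := by
        rw [Real.log_mul (Real.exp_ne_zero 1) hM.ne', Real.log_exp]
      have h2 : Real.log t ≤ Real.log M :=
        Real.log_le_log (hx.trans ht.1) (le_of_lt (ht.2.trans_le hyM))
      rw [h1]; linarith
  have key : f x ≤ f y := hmono (Set.left_mem_Icc.2 hxy) (Set.right_mem_Icc.2 hxy) hxy
  have hfx : ∀ t : ℝ, 0 < t → f t = t * Real.log (Real.exp 1 * M / t) := by
    intro t ht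
    rw [hf]; simp only
    rw [Real.log_div heM.ne' ht.ne']
    ring
  rw [hfx x hx, hfx y hy] at key
  rw [Real.rpow_def_of_pos (by positivity), Real.rpow_def_of_pos (by positivity)]
  exact Real.exp_le_exp.2 (by rw [mul_comm (Real.log _) x, mul_comm (Real.log _) y]; exact key)


/-- Tensorization, fixed-scale version: if `χ₁,…,χ_m` are independent with
`P[|χᵢ| ≤ η] ≤ τ`, then for `ε ∈ (0,1]`,
`P[‖(χ₁,…,χ_m)‖₂ ≤ η√(εm)] ≤ (e/ε)^{εm} τ^{m-εm}`. -/
theorem stmt_6 {Ω : Type*} [MeasurableSpace Ω] (μ : Measure Ω) [IsProbabilityMeasure μ]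
    (m : ℕ) (χ : Fin m → Ω → ℝ) (hmeas : ∀ i, Measurable (χ i))
    (hindep : iIndepFun χ μ)
    (η τ : ℝ) (hη : 0 < η) (hτ : 0 < τ)
    (hanti : ∀ i, μ {ω | |χ i ω| ≤ η} ≤ ENNReal.ofReal τ) :
    ∀ ε : ℝ, 0 < ε → ε ≤ 1 →
      μ {ω | Real.sqrt (∑ i, (χ i ω) ^ 2) ≤ η * Real.sqrt (ε * m)} ≤
        ENNReal.ofReal ((Real.exp 1 / ε) ^ (ε * (m : ℝ)) *
          τ ^ ((m : ℝ) - ε * (m : ℝ))) := by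
  intro ε hε hε1
  classical
  have hεm0 : 0 ≤ ε * m := by positivity
  have hεmm : ε * m ≤ m := by nlinarith [Nat.cast_nonneg (α := ℝ) m]
  have hbase : (1:ℝ) ≤ Real.exp 1 / ε := by
    rw [le_div_iff₀ hε]
    nlinarith [Real.add_one_le_exp 1]
  have hrhs1 : 1 ≤ (Real.exp 1 / ε) ^ (ε * (m : ℝ)) :=
    calc (1:ℝ) = 1 ^ (ε * (m:ℝ)) := (Real.one_rpow _).symm
      _ ≤ (Real.exp 1 / ε) ^ (ε * (m : ℝ)) := Real.rpow_le_rpow zero_le_one hbase hεm0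
  -- dispatch the easy case τ ≥ 1
  rcases le_or_gt 1 τ with hτ1 | hτ1
  · calc μ _ ≤ 1 := prob_le_one
      _ ≤ _ := by
          rw [← ENNReal.ofReal_one]
          apply ENNReal.ofReal_le_ofReal
          have : 1 ≤ τ ^ ((m : ℝ) - ε * (m : ℝ)) := by
            rw [← Real.one_rpow ((m:ℝ) - ε * m)]
            exact Real.rpow_le_rpow zero_le_one hτ1 (by linarith)
          nlinarith
  -- main case
  set k₀ : ℕ := ⌊ε * m⌋₊ with hk₀
  have hk₀le : (k₀ : ℝ) ≤ ε * m := Nat.floor_le hεm0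
  have hk₀m : k₀ ≤ m := by
    have : (k₀ : ℝ) ≤ (m : ℝ) := hk₀le.trans hεmm
    exact_mod_cast this
  set s₀ : ℕ := m - k₀ with hs₀
  set A : Fin m → Set Ω := fun i => {ω | |χ i ω| ≤ η} with hA
  -- the covering
  have hcover : {ω | Real.sqrt (∑ i, (χ i ω) ^ 2) ≤ η * Real.sqrt (ε * m)} ⊆
      ⋃ S ∈ Finset.powersetCard s₀ (univ : Finset (Fin m)), ⋂ i ∈ S, A i := by
    intro ω hω
    simp only [Set.mem_setOf_eq] at hω
    have hsum : ∑ i, (χ i ω) ^ 2 ≤ η ^ 2 * (ε * m) := by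
      have h1 : ∑ i, (χ i ω) ^ 2 = (Real.sqrt (∑ i, (χ i ω) ^ 2)) ^ 2 :=
        (Real.sq_sqrt (by positivity)).symm
      have h2 : (Real.sqrt (∑ i, (χ i ω) ^ 2)) ^ 2 ≤ (η * Real.sqrt (ε * m)) ^ 2 :=
        pow_le_pow_left₀ (Real.sqrt_nonneg _) hω 2
      rw [mul_pow, Real.sq_sqrt hεm0] at h2
      linarith
    set T : Finset (Fin m) := univ.filter (fun i => |χ i ω| ≤ η) with hT
    have hTc : (univ.filter (fun i => ¬ |χ i ω| ≤ η)).card ≤ k₀ := by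
      apply Nat.le_floor
      set B := univ.filter (fun i => ¬ |χ i ω| ≤ η) with hB
      have hcard : (B.card : ℝ) * η ^ 2 ≤ ∑ i ∈ B, (χ i ω) ^ 2 := by
        calc (B.card : ℝ) * η ^ 2 = ∑ _i ∈ B, η ^ 2 := by
              rw [Finset.sum_const, nsmul_eq_mul]
          _ ≤ ∑ i ∈ B, (χ i ω) ^ 2 := by
              apply Finset.sum_le_sum
              intro i hi
              rw [hB, Finset.mem_filter] at hi
              have h3 : η ≤ |χ i ω| := (not_le.1 hi.2).le
              calc η ^ 2 ≤ |χ i ω| ^ 2 := pow_le_pow_left₀ hη.le h3 2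
                _ = (χ i ω) ^ 2 := sq_abs _
      have hsub : ∑ i ∈ B, (χ i ω) ^ 2 ≤ ∑ i, (χ i ω) ^ 2 :=
        Finset.sum_le_sum_of_subset_of_nonneg (Finset.subset_univ B)
          (fun i _ _ => sq_nonneg _)
      have := hcard.trans (hsub.trans hsum)
      calc (B.card : ℝ) = (B.card : ℝ) * η ^ 2 / η ^ 2 := by field_simp
        _ ≤ η ^ 2 * (ε * m) / η ^ 2 := by gcongr
        _ = ε * m := by field_simp
    have hTcard : s₀ ≤ T.card := by
      have := Finset.card_filter_add_card_filter_not
        (s := (univ : Finset (Fin m))) (p := fun i => |χ i ω| ≤ η)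
      simp only [Finset.card_univ, Fintype.card_fin] at this
      rw [← hT] at this
      omega
    obtain ⟨S, hST, hScard⟩ := Finset.exists_subset_card_eq hTcard
    refine Set.mem_iUnion₂.2 ⟨S, Finset.mem_powersetCard.2 ⟨Finset.subset_univ S, hScard⟩, ?_⟩
    · simp only [Set.mem_iInter]
      intro i hi
      have := hST hi
      rw [hT, Finset.mem_filter] at this
      exact this.2
  -- union bound
  have habs : ∀ i : Fin m, MeasurableSet[(inferInstance : MeasurableSpace ℝ).comap (χ i)] (A i) := by
    intro i
    refine ⟨{x : ℝ | |x| ≤ η}, ?_, rfl⟩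
    have : {x : ℝ | |x| ≤ η} = Set.Icc (-η) η := by ext x; simp [abs_le]
    rw [this]; exact measurableSet_Icc
  have hS : ∀ S : Finset (Fin m), μ (⋂ i ∈ S, A i) ≤ (ENNReal.ofReal τ) ^ S.card := by
    intro S
    rw [hindep.meas_biInter (fun i _ => habs i)]
    calc ∏ i ∈ S, μ (A i) ≤ ∏ _i ∈ S, ENNReal.ofReal τ :=
          Finset.prod_le_prod' (fun i _ => hanti i)
      _ = (ENNReal.ofReal τ) ^ S.card := Finset.prod_const _
  have hmain : μ {ω | Real.sqrt (∑ i, (χ i ω) ^ 2) ≤ η * Real.sqrt (ε * m)} ≤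
      (m.choose k₀ : ENNReal) * (ENNReal.ofReal τ) ^ s₀ := by
    calc μ _ ≤ μ (⋃ S ∈ Finset.powersetCard s₀ (univ : Finset (Fin m)), ⋂ i ∈ S, A i) :=
          measure_mono hcover
      _ ≤ ∑ S ∈ Finset.powersetCard s₀ (univ : Finset (Fin m)), μ (⋂ i ∈ S, A i) :=
          measure_biUnion_finset_le _ _
      _ ≤ ∑ S ∈ Finset.powersetCard s₀ (univ : Finset (Fin m)), (ENNReal.ofReal τ) ^ s₀ := by
          apply Finset.sum_le_sum
          intro S hSmem
          have := (Finset.mem_powersetCard.1 hSmem).2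
          rw [← this]
          exact hS S
      _ = (Finset.powersetCard s₀ (univ : Finset (Fin m))).card • (ENNReal.ofReal τ) ^ s₀ :=
          (Finset.sum_const _)
      _ = (m.choose k₀ : ENNReal) * (ENNReal.ofReal τ) ^ s₀ := by
          rw [Finset.card_powersetCard, Finset.card_univ, Fintype.card_fin,
            nsmul_eq_mul, hs₀, Nat.choose_symm hk₀m]
  refine hmain.trans ?_
  -- final real arithmetic
  rw [← ENNReal.ofReal_pow hτ.le, ← ENNReal.ofReal_natCast, ← ENNReal.ofReal_mul (by positivity)]
  apply ENNReal.ofReal_le_ofReal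
  have hchoose : (m.choose k₀ : ℝ) ≤ (Real.exp 1 / ε) ^ (ε * (m : ℝ)) := by
    rcases Nat.eq_zero_or_pos m with hm | hm
    · subst hm
      simp [hk₀]
    · have hmpos : (0:ℝ) < m := by exact_mod_cast hm
      have hεmpos : 0 < ε * m := by positivity
      have heq : Real.exp 1 / ε = Real.exp 1 * m / (ε * m) := by
        field_simp
      rw [heq]
      rcases Nat.eq_zero_or_pos k₀ with hk0 | hk0
      · rw [hk0]
        simp only [Nat.choose_zero_right, Nat.cast_one]
        have hb2 : (1:ℝ) ≤ Real.exp 1 * m / (ε * m) := by rw [← heq]; exact hbase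
        calc (1:ℝ) = 1 ^ (ε * (m:ℝ)) := (Real.one_rpow _).symm
          _ ≤ _ := Real.rpow_le_rpow zero_le_one hb2 hεm0
      · have hk0p : (0:ℝ) < k₀ := by exact_mod_cast hk0
        calc (m.choose k₀ : ℝ) ≤ (Real.exp 1 * m / k₀) ^ k₀ := choose_le_emk m k₀ hk0
          _ = (Real.exp 1 * m / k₀) ^ (k₀ : ℝ) := (Real.rpow_natCast _ _).symm
          _ ≤ (Real.exp 1 * m / (ε * m)) ^ (ε * (m:ℝ)) :=
              emk_rpow_mono hk0p hk₀le hεmm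
  have hτpow : τ ^ s₀ ≤ τ ^ ((m : ℝ) - ε * (m : ℝ)) := by
    rw [← Real.rpow_natCast τ s₀]
    apply Real.rpow_le_rpow_of_exponent_ge hτ hτ1.le
    rw [hs₀, Nat.cast_sub hk₀m]
    linarith
  have h2 : (0:ℝ) ≤ τ ^ s₀ := by positivity
  exact mul_le_mul hchoose hτpow h2 (Real.rpow_nonneg (by positivity) _)
end

section
/- Bounded increments in a step record: suppose (w₁,…,w_ℓ) ∈ [k]^ℓ, λ ∈ (0,1/3), and let J_j = {i : w_i = j and W_i(j)/i ≤ λ} where W_i(j) = #{u ≤ i : w_u = j}. Then ∏_{j=1}^k ∏_{i ∈ J_j} (i / W_i(j)) ≤ (e/λ)^{2kλℓ}. -/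
open Finset

lemma aux_pow_div_factorial_le_exp {x : ℝ} (hx : 0 ≤ x) (n : ℕ) :
    x ^ n / n.factorial ≤ Real.exp x := by
  calc x ^ n / n.factorial
      ≤ ∑ i ∈ range (n + 1), x ^ i / i.factorial := by
        refine Finset.single_le_sum (f := fun i => x ^ i / (i.factorial : ℝ)) ?_
          (self_mem_range_succ n)
        intro i _
        positivity
    _ ≤ Real.exp x := Real.sum_le_exp_of_nonneg hx _

lemma aux_icc_prod {m : ℕ} {lam L : ℝ} (hlam : 0 < lam) (hlam1 : lam ≤ 1)
    (hL : 0 ≤ L) (hm : m = ⌊lam * L⌋₊) :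
    ∏ t ∈ Icc 1 m, (L / (t : ℝ)) ≤ (Real.exp 1 / lam) ^ (2 * lam * L) := by
  have hbase0 : (0:ℝ) < Real.exp 1 / lam := by positivity
  have h1base : (1:ℝ) ≤ Real.exp 1 / lam := by
    rw [le_div_iff₀ hlam]
    have := Real.add_one_le_exp (1:ℝ)
    linarith
  have hexp0 : 0 ≤ 2 * lam * L := by positivity
  rcases Nat.eq_zero_or_pos m with hm0 | hm1
  · rw [hm0]
    simp only [show Icc 1 0 = (∅ : Finset ℕ) by rfl, prod_empty]
    calc (1:ℝ) = (Real.exp 1 / lam) ^ (0:ℝ) := (Real.rpow_zero _).symm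
      _ ≤ (Real.exp 1 / lam) ^ (2 * lam * L) :=
          Real.rpow_le_rpow_of_exponent_le h1base hexp0
  · have hfloor : (m : ℝ) ≤ lam * L := hm ▸ Nat.floor_le (by positivity)
    have hfloor' : lam * L < m + 1 := hm ▸ Nat.lt_floor_add_one _
    have h1lam : (1:ℝ) ≤ 1 / lam := by
      rw [le_div_iff₀ hlam]; linarith
    have hfact : (0:ℝ) < m.factorial := by exact_mod_cast m.factorial_pos
    calc ∏ t ∈ Icc 1 m, (L / (t : ℝ))
        ≤ ∏ t ∈ Icc 1 m, (((m:ℝ) + 1) / lam / (t : ℝ)) := by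
          refine prod_le_prod (fun t ht => by positivity) (fun t ht => ?_)
          have ht1 : 1 ≤ t := (mem_Icc.mp ht).1
          have htpos : (0:ℝ) < t := by exact_mod_cast ht1
          rw [div_le_div_iff_of_pos_right htpos, le_div_iff₀ hlam]
          nlinarith
      _ = (1 / lam) ^ m * (((m:ℝ) + 1) ^ m / m.factorial) := by
          have he : ∀ t ∈ Icc 1 m, ((m:ℝ) + 1) / lam / (t:ℝ)
              = (1 / lam) * (((m:ℝ) + 1) / (t:ℝ)) := by
            intro t ht; field_simp
          rw [prod_congr rfl he, prod_mul_distrib, prod_const, prod_div_distrib,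
            prod_const, Nat.card_Icc, Nat.add_sub_cancel]
          congr 2
          rw [← Nat.cast_prod, ← Finset.Ico_add_one_right_eq_Icc, Finset.prod_Ico_id_eq_factorial m]
      _ ≤ (1 / lam) ^ m * Real.exp ((m:ℝ) + 1) := by
          refine mul_le_mul_of_nonneg_left ?_ (by positivity)
          exact aux_pow_div_factorial_le_exp (by positivity) m
      _ ≤ (1 / lam) ^ (2 * lam * L) * Real.exp (2 * lam * L) := by
          refine mul_le_mul ?_ ?_ (by positivity) (by positivity)
          · rw [← Real.rpow_natCast (1/lam) m]
            exact Real.rpow_le_rpow_of_exponent_le h1lam (by nlinarith)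
          · refine Real.exp_le_exp.mpr ?_
            have : (1:ℝ) ≤ m := by exact_mod_cast hm1
            nlinarith
      _ = (Real.exp 1 / lam) ^ (2 * lam * L) := by
          rw [Real.div_rpow (Real.exp_pos 1).le hlam.le, Real.exp_one_rpow,
            Real.div_rpow (by norm_num) hlam.le, Real.one_rpow]
          field_simp

/-- Bounded increments in a step record: with `J_j = {i : w_i = j ∧ W_i(j)/i ≤ λ}`,
`∏_j ∏_{i ∈ J_j} (i / W_i(j)) ≤ (e/λ)^{2kλℓ}`. -/
theorem stmt_8 {k ℓ : ℕ} (w : Fin ℓ → Fin k) (lam : ℝ)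
    (hlam : 0 < lam) (hlam' : lam < 1 / 3)
    (W : Fin ℓ → Fin k → ℕ)
    (hW : ∀ i j, W i j = (Finset.univ.filter fun u : Fin ℓ => u ≤ i ∧ w u = j).card) :
    ∏ j : Fin k, ∏ i ∈ Finset.univ.filter
        (fun i : Fin ℓ => w i = j ∧ (W i j : ℝ) ≤ lam * ((i : ℕ) + 1)),
      ((((i : ℕ) : ℝ) + 1) / (W i j : ℝ)) ≤
      (Real.exp 1 / lam) ^ (2 * (k : ℝ) * lam * (ℓ : ℝ)) := by
  have hlam1 : lam ≤ 1 := by linarith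
  have hbase0 : (0:ℝ) < Real.exp 1 / lam := by positivity
  set m := ⌊lam * ℓ⌋₊ with hm
  have hWpos : ∀ (i : Fin ℓ) (j : Fin k), w i = j → 1 ≤ W i j := by
    intro i j hij
    rw [hW]
    exact Finset.card_pos.mpr ⟨i, by simp [hij]⟩
  have hWmono : ∀ (j : Fin k) (i i' : Fin ℓ), i < i' → w i' = j → W i j < W i' j := by
    intro j i i' hii' hw
    rw [hW, hW]
    refine Finset.card_lt_card ⟨?_, ?_⟩
    · intro u hu
      simp only [mem_filter, mem_univ, true_and] at hu ⊢
      exact ⟨hu.1.trans hii'.le, hu.2⟩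
    · intro hsub
      have := hsub (by simp [hw] : i' ∈ _)
      simp only [mem_filter, mem_univ, true_and] at this
      exact absurd this.1 (not_le.mpr hii')
  -- per-j bound
  have key : ∀ j : Fin k,
      ∏ i ∈ Finset.univ.filter
        (fun i : Fin ℓ => w i = j ∧ (W i j : ℝ) ≤ lam * ((i : ℕ) + 1)),
        ((((i : ℕ) : ℝ) + 1) / (W i j : ℝ)) ≤ (Real.exp 1 / lam) ^ (2 * lam * (ℓ:ℝ)) := by
    intro j
    set S := Finset.univ.filter
      (fun i : Fin ℓ => w i = j ∧ (W i j : ℝ) ≤ lam * ((i : ℕ) + 1)) with hS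
    have hmemS : ∀ i ∈ S, w i = j ∧ (W i j : ℝ) ≤ lam * ((i : ℕ) + 1) := by
      intro i hi; simpa [hS] using hi
    have hinj : Set.InjOn (fun i => W i j) S := by
      intro a ha b hb hab
      by_contra hne
      rcases lt_or_gt_of_ne (fun h : a = b => hne h) with h | h
      · exact absurd hab (Nat.ne_of_lt (hWmono j a b h (hmemS b hb).1))
      · exact absurd hab.symm (Nat.ne_of_lt (hWmono j b a h (hmemS a ha).1))
    calc ∏ i ∈ S, ((((i : ℕ) : ℝ) + 1) / (W i j : ℝ))
        ≤ ∏ i ∈ S, ((ℓ : ℝ) / (W i j : ℝ)) := by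
          refine prod_le_prod (fun i hi => by positivity) (fun i hi => ?_)
          have h1 : 1 ≤ W i j := hWpos i j (hmemS i hi).1
          have : (0:ℝ) < W i j := by exact_mod_cast h1
          rw [div_le_div_iff_of_pos_right this]
          exact_mod_cast Nat.succ_le_of_lt i.isLt
      _ = ∏ t ∈ S.image (fun i => W i j), ((ℓ : ℝ) / (t : ℝ)) :=
          (Finset.prod_image (f := fun t : ℕ => (ℓ:ℝ) / (t:ℝ)) (fun a ha b hb h => hinj ha hb h)).symm
      _ ≤ ∏ t ∈ Icc 1 m, ((ℓ : ℝ) / (t : ℝ)) := by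
          have hsub : S.image (fun i => W i j) ⊆ Icc 1 m := ?_
          case _ =>
            rw [← Finset.prod_sdiff (f := fun t : ℕ => (ℓ:ℝ) / (t:ℝ)) hsub]
            refine le_mul_of_one_le_left (prod_nonneg fun t _ => by positivity) ?_
            calc (1:ℝ) = ∏ _t ∈ (Icc 1 m \ S.image (fun i => W i j)), 1 := by simp
              _ ≤ ∏ t ∈ (Icc 1 m \ S.image (fun i => W i j)), ((ℓ : ℝ) / (t : ℝ)) := by
                refine prod_le_prod (fun _ _ => zero_le_one) (fun t ht => ?_)
                have ht' := mem_Icc.mp (Finset.mem_sdiff.mp ht).1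
                have ht1 : (1:ℝ) ≤ t := by exact_mod_cast ht'.1
                have htm : (t:ℝ) ≤ m := by exact_mod_cast ht'.2
                have hmL : (m:ℝ) ≤ lam * ℓ := Nat.floor_le (by positivity)
                have hlamL : lam * ℓ ≤ ℓ := by nlinarith [Nat.cast_nonneg (α := ℝ) ℓ]
                rw [le_div_iff₀ (by linarith : (0:ℝ) < t)]
                linarith
          · intro t ht
            rcases Finset.mem_image.mp ht with ⟨i, hi, rfl⟩
            rcases hmemS i hi with ⟨hwi, hle⟩
            refine mem_Icc.mpr ⟨hWpos i j hwi, ?_⟩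
            refine Nat.le_floor ?_
            refine hle.trans ?_
            have : ((i:ℕ):ℝ) + 1 ≤ (ℓ:ℝ) := by exact_mod_cast Nat.succ_le_of_lt i.isLt
            nlinarith
      _ ≤ (Real.exp 1 / lam) ^ (2 * lam * (ℓ:ℝ)) :=
          aux_icc_prod hlam hlam1 (Nat.cast_nonneg ℓ) hm
  calc ∏ j : Fin k, ∏ i ∈ Finset.univ.filter
        (fun i : Fin ℓ => w i = j ∧ (W i j : ℝ) ≤ lam * ((i : ℕ) + 1)),
        ((((i : ℕ) : ℝ) + 1) / (W i j : ℝ))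
      ≤ ∏ _j : Fin k, (Real.exp 1 / lam) ^ (2 * lam * (ℓ:ℝ)) := by
        refine prod_le_prod (fun j _ => ?_) (fun j _ => key j)
        exact prod_nonneg fun i _ => by positivity
    _ = (Real.exp 1 / lam) ^ (2 * (k : ℝ) * lam * (ℓ : ℝ)) := by
        rw [prod_const, card_univ, Fintype.card_fin, ← Real.rpow_natCast _ k,
          ← Real.rpow_mul hbase0.le]
        ring_nf
end

section
/- There exists θ = θ(ξ) > 0 such that for every unit vector x ∈ ℝⁿ, sup_{z∈ℝ} P[|b₁x₁+⋯+b_nx_n − z| ≤ θ] ≤ ‖p‖_∞, where b₁,…,b_n are i.i.d. copies of a discrete random variable ξ with maximal atom probability ‖p‖_∞. -/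
open MeasureTheory ProbabilityTheory Finset
open Real

noncomputable def GK (T y : ℝ) : ℝ := if y = 0 then T^2/4 else Real.sin (T*y/2)^2 / y^2

lemma GK_nonneg (T y : ℝ) (hT : 0 < T) : 0 ≤ GK T y := by
  unfold GK; split
  · positivity
  · positivity

lemma GK_ge (T y : ℝ) (hT : 0 < T) (hy : |y| ≤ π / T) : T^2/π^2 ≤ GK T y := by
  have hπ := Real.pi_gt_three
  unfold GK
  split_ifs with h
  · rw [div_le_div_iff₀ (by positivity) (by norm_num)]
    nlinarith [mul_nonneg (sq_nonneg T) (by nlinarith : (0:ℝ) ≤ π^2 - 4)]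
  · have hy0 : 0 < |y| := abs_pos.mpr h
    have hTy : T * |y| / 2 ≤ π / 2 := by
      rw [div_le_div_iff₀ (by norm_num) (by norm_num)]
      have : T * |y| ≤ T * (π / T) := by gcongr
      rw [mul_div_cancel₀ _ hT.ne'] at this
      linarith
    have hs := Real.mul_le_sin (x := T * |y| / 2) (by positivity) hTy
    have hs2 : (2 / π * (T * |y| / 2))^2 ≤ Real.sin (T * |y| / 2) ^ 2 :=
      pow_le_pow_left₀ (by positivity) hs 2
    have hsq : Real.sin (T * |y| / 2) ^ 2 = Real.sin (T * y / 2) ^ 2 := by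
      rcases abs_cases y with ⟨h1, _⟩ | ⟨h1, _⟩ <;> rw [h1]
      have : T * -y / 2 = -(T * y / 2) := by ring
      rw [this, Real.sin_neg, neg_pow]
      ring
    have hexp : (2 / π * (T * |y| / 2))^2 = T^2 * y^2 / π^2 := by
      field_simp; rw [sq_abs]
    rw [div_le_div_iff₀ (by positivity) (by positivity), ← hsq]
    rw [hexp] at hs2
    rw [div_le_iff₀ (by positivity)] at hs2
    linarith


lemma fejer_integral (T : ℝ) (hT : 0 < T) (y : ℝ) :
    ∫ t in (0:ℝ)..T, (1 - t/T) * Real.cos (t*y) = (2/T) * GK T y := by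
  rcases eq_or_ne y 0 with rfl | hy
  · have : ∀ t : ℝ, (1 - t/T) * Real.cos (t*0) = 1 - (1/T) * t := by
      intro t; rw [mul_zero, Real.cos_zero, mul_one]; ring
    simp only [this]
    have hi : IntervalIntegrable (fun t : ℝ => 1/T * t) MeasureTheory.volume 0 T :=
      (by fun_prop : Continuous fun t : ℝ => 1/T * t).intervalIntegrable 0 T
    rw [intervalIntegral.integral_sub intervalIntegrable_const hi,
      intervalIntegral.integral_const_mul, integral_id, intervalIntegral.integral_const]
    unfold GK
    rw [if_pos rfl]
    field_simp
    ring
  · set H : ℝ → ℝ := fun t => (1 - t/T) * (Real.sin (t*y)/y) - Real.cos (t*y)/(T*y^2) with hH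
    have hderiv : ∀ t ∈ Set.uIcc (0:ℝ) T, HasDerivAt H ((1 - t/T) * Real.cos (t*y)) t := by
      intro t _
      have h1 : HasDerivAt (fun t : ℝ => 1 - t/T) (-(1/T)) t := by
        simpa using ((hasDerivAt_id t).div_const T).const_sub 1
      have h2 : HasDerivAt (fun t : ℝ => Real.sin (t*y)) (Real.cos (t*y) * y) t :=
        (hasDerivAt_mul_const y).sin
      have h3 : HasDerivAt (fun t : ℝ => Real.cos (t*y)) (-Real.sin (t*y) * y) t :=
        (hasDerivAt_mul_const y).cos
      have := (h1.mul (h2.div_const y)).sub ((h3.div_const (T*y^2)))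
      refine this.congr_deriv ?_
      field_simp
      ring
    have hint : IntervalIntegrable (fun t => (1 - t/T) * Real.cos (t*y)) MeasureTheory.volume 0 T :=
      (((continuous_const.sub (continuous_id.div_const T))).mul
        (Real.continuous_cos.comp (continuous_id.mul continuous_const))).intervalIntegrable 0 T
    rw [intervalIntegral.integral_eq_sub_of_hasDerivAt hderiv hint]
    unfold GK
    simp only [if_neg hy, hH]
    have hcos : Real.cos (T*y) = 1 - 2 * Real.sin (T*y/2)^2 := by
      have := Real.sin_sq_eq_half_sub (T*y/2)
      rw [show 2*(T*y/2) = T*y by ring] at this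
      linarith
    rw [hcos]
    field_simp
    simp only [sub_self, mul_zero, zero_mul, Real.sin_zero, Real.cos_zero]
    ring

lemma abs_psi_le {k : ℕ} (a p : Fin k → ℝ) (hp : ∀ i, 0 < p i) (hsum : ∑ i, p i = 1)
    (i₀ i₁ : Fin k) (hne : i₀ ≠ i₁) (s : ℝ) (hs : |s * (a i₀ - a i₁)| ≤ π) :
    ‖∑ l, (p l : ℂ) * Complex.exp ((s * a l : ℝ) * Complex.I)‖
      ≤ Real.exp (-(2 * p i₀ * p i₁ * (a i₀ - a i₁)^2 / π^2 * s^2)) := by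
  set ψ : ℂ := ∑ l, (p l : ℂ) * Complex.exp ((s * a l : ℝ) * Complex.I) with hψ
  have hre : ψ.re = ∑ l, p l * Real.cos (s * a l) := by
    rw [hψ, Complex.re_sum]
    refine Finset.sum_congr rfl fun l _ => ?_
    rw [Complex.mul_re, Complex.ofReal_re, Complex.ofReal_im,
      Complex.exp_ofReal_mul_I_re, Complex.exp_ofReal_mul_I_im]
    ring
  have him : ψ.im = ∑ l, p l * Real.sin (s * a l) := by
    rw [hψ, Complex.im_sum]
    refine Finset.sum_congr rfl fun l _ => ?_
    rw [Complex.mul_im, Complex.ofReal_re, Complex.ofReal_im,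
      Complex.exp_ofReal_mul_I_re, Complex.exp_ofReal_mul_I_im]
    ring
  have habs2 : ‖ψ‖ ^ 2
      = ∑ l, ∑ m, p l * p m * Real.cos (s * a l - s * a m) := by
    rw [Complex.sq_norm, Complex.normSq_apply, hre, him, ← sq, ← sq,
      sq, Finset.sum_mul_sum, sq, Finset.sum_mul_sum, ← Finset.sum_add_distrib]
    refine Finset.sum_congr rfl fun l _ => ?_
    rw [← Finset.sum_add_distrib]
    refine Finset.sum_congr rfl fun m _ => ?_
    rw [Real.cos_sub]
    ring
  -- lower bound for the "defect"
  have hterm_nonneg : ∀ q : Fin k × Fin k, q ∈ Finset.univ ×ˢ Finset.univ →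
      0 ≤ p q.1 * p q.2 * (1 - Real.cos (s * a q.1 - s * a q.2)) := by
    intro q _
    have h3 : 0 ≤ 1 - Real.cos (s * a q.1 - s * a q.2) := by
      linarith [Real.cos_le_one (s * a q.1 - s * a q.2)]
    exact mul_nonneg (mul_nonneg (hp q.1).le (hp q.2).le) h3
  have hpair : ({(i₀, i₁), (i₁, i₀)} : Finset (Fin k × Fin k)) ⊆ Finset.univ ×ˢ Finset.univ := by
    intro q _; simp
  have hdefect : 2 * p i₀ * p i₁ * (1 - Real.cos (s * a i₀ - s * a i₁))
      ≤ ∑ l, ∑ m, p l * p m * (1 - Real.cos (s * a l - s * a m)) := by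
    rw [← Finset.sum_product']
    refine le_trans ?_ (Finset.sum_le_sum_of_subset_of_nonneg hpair
      (fun q hq _ => hterm_nonneg q hq))
    rw [Finset.sum_pair (by simp [hne] : (i₀, i₁) ≠ (i₁, i₀))]
    have : Real.cos (s * a i₁ - s * a i₀) = Real.cos (s * a i₀ - s * a i₁) := by
      rw [show s * a i₁ - s * a i₀ = -(s * a i₀ - s * a i₁) by ring, Real.cos_neg]
    rw [this]
    exact le_of_eq (by ring)
  set D := a i₀ - a i₁ with hD
  set u : ℝ := 2 * p i₀ * p i₁ * D^2 / π^2 * s^2 with hu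
  have hμ : (∑ l, ∑ m, p l * p m) = 1 := by
    rw [← Finset.sum_mul_sum, hsum, one_mul]
  have e1 : ∑ l, ∑ m, p l * p m * Real.cos (s * a l - s * a m)
      = (∑ l, ∑ m, p l * p m) - ∑ l, ∑ m, p l * p m * (1 - Real.cos (s * a l - s * a m)) := by
    rw [← Finset.sum_sub_distrib]
    refine Finset.sum_congr rfl fun l _ => ?_
    rw [← Finset.sum_sub_distrib]
    exact Finset.sum_congr rfl fun m _ => by ring
  have hquad : 2/π^2 * (s*D)^2 ≤ 1 - Real.cos (s * a i₀ - s * a i₁) := by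
    have hsd : s * a i₀ - s * a i₁ = s * D := by rw [hD]; ring
    rw [hsd]
    linarith [Real.cos_le_one_sub_mul_cos_sq hs]
  have h2 : ‖ψ‖ ^ 2 ≤ Real.exp (-(2*u)) := by
    rw [habs2, e1, hμ]
    have hmul := mul_le_mul_of_nonneg_left hquad
      (mul_nonneg (by norm_num : (0:ℝ) ≤ 2) (mul_nonneg (hp i₀).le (hp i₁).le))
    have huu : 2 * (p i₀ * p i₁) * (2/π^2 * (s*D)^2) = 2*u := by
      rw [hu]; ring
    have hexp := Real.add_one_le_exp (-(2*u))
    nlinarith [hdefect]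
  have hA : 0 ≤ ‖ψ‖ := norm_nonneg _
  have : ‖ψ‖ ≤ Real.exp (-u) := by
    calc ‖ψ‖ = Real.sqrt (‖ψ‖ ^ 2) := (Real.sqrt_sq hA).symm
      _ ≤ Real.sqrt (Real.exp (-(2*u))) := Real.sqrt_le_sqrt h2
      _ = Real.exp (-u) := by
          rw [show (-(2*u)) = (-u) + (-u) by ring, Real.exp_add, ← sq,
            Real.sqrt_sq (Real.exp_pos _).le]
  exact this

lemma final_algebra (A B q : ℝ) (hA : A ≠ 0) (hB : B ≠ 0) (hq : q ≠ 0) :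
    A/(2*(A*B/(4*q)))*(B/2) = q := by
  field_simp
  ring

theorem finite_bound {k : ℕ} (hk : 2 ≤ k) (a : Fin k → ℝ) (ha : Function.Injective a)
    (p : Fin k → ℝ) (hp : ∀ i, 0 < p i) (hsum : ∑ i, p i = 1)
    (pmax : ℝ) (hpmax : ∀ i, p i ≤ pmax) :
    ∃ θ : ℝ, 0 < θ ∧ ∀ (n : ℕ) (x : Fin n → ℝ), (∑ i, (x i)^2 = 1) → ∀ z : ℝ,
      (∑ f ∈ Finset.univ.filter
          (fun f : Fin n → Fin k => |(∑ i, a (f i) * x i) - z| ≤ θ),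
        ∏ i, p (f i)) ≤ pmax := by
  have hπ := Real.pi_pos
  set i₀ : Fin k := ⟨0, by omega⟩ with hi₀
  set i₁ : Fin k := ⟨1, by omega⟩ with hi₁
  have hne : i₀ ≠ i₁ := by
    simp only [hi₀, hi₁, Fin.mk.injEq, ne_eq]
    omega
  set D : ℝ := a i₀ - a i₁ with hD
  have hDne : D ≠ 0 := sub_ne_zero.mpr fun h => hne (ha h)
  have hDabs : 0 < |D| := abs_pos.mpr hDne
  have hD2 : 0 < D^2 := by positivity
  set β : ℝ := 4 * p i₀ * p i₁ * D^2 / π^2 with hβ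
  have hβpos : 0 < β := by
    apply div_pos _ (by positivity)
    nlinarith [mul_pos (mul_pos (hp i₀) (hp i₁)) hD2]
  set S9 : ℝ := Real.sqrt (2*π/β) with hS9
  have hS9pos : 0 < S9 := Real.sqrt_pos.mpr (by positivity)
  have hpm : 0 < pmax := lt_of_lt_of_le (hp i₀) (hpmax i₀)
  set T : ℝ := π^2 * S9 / (4*pmax) with hT
  have hTpos : 0 < T := by positivity
  set c : ℝ := π / (|D| * T) with hc
  have hcpos : 0 < c := div_pos hπ (mul_pos hDabs hTpos)
  set gaps : Finset ℝ :=
    (Finset.univ.offDiag.image fun q : Fin k × Fin k => |a q.1 - a q.2|) with hgaps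
  have hmemgap : ∀ l m : Fin k, l ≠ m → |a l - a m| ∈ gaps := by
    intro l m h
    rw [hgaps]
    refine Finset.mem_image.mpr ⟨(l, m), ?_, rfl⟩
    exact Finset.mem_offDiag.mpr ⟨Finset.mem_univ _, Finset.mem_univ _, h⟩
  have hgen : gaps.Nonempty := ⟨|a i₀ - a i₁|, hmemgap _ _ hne⟩
  set δ : ℝ := gaps.min' hgen with hδ
  have hδpos : 0 < δ := by
    obtain ⟨q, hq, hqe⟩ := Finset.mem_image.mp (gaps.min'_mem hgen)
    rw [hδ, ← hqe]
    exact abs_pos.mpr (sub_ne_zero.mpr fun h => (Finset.mem_offDiag.mp hq).2.2 (ha h))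
  have hδle : ∀ l m : Fin k, l ≠ m → δ ≤ |a l - a m| := fun l m h =>
    Finset.min'_le _ _ (hmemgap _ _ h)
  refine ⟨min (π/T) (δ*c/3), lt_min (by positivity) (by positivity), ?_⟩
  intro n x hx z
  set θ : ℝ := min (π/T) (δ*c/3) with hθ
  by_cases hbig : ∃ j, c < |x j|
  · obtain ⟨j, hj⟩ := hbig
    have hθle : θ ≤ δ*c/3 := min_le_right _ _
    classical
    -- single-coordinate concentration bound
    have key : ∀ w : ℝ, (∑ l, if |a l * x j - w| ≤ θ then p l else 0) ≤ pmax := by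
      intro w
      have huniq : ∀ l ∈ Finset.univ.filter (fun l : Fin k => |a l * x j - w| ≤ θ),
          ∀ m ∈ Finset.univ.filter (fun l : Fin k => |a l * x j - w| ≤ θ), l = m := by
        intro l hl m hm
        by_contra hlm
        simp only [Finset.mem_filter, Finset.mem_univ, true_and] at hl hm
        have h1 : |(a l - a m) * x j| ≤ 2*θ := by
          calc |(a l - a m) * x j| = |(a l * x j - w) - (a m * x j - w)| := by ring_nf
            _ ≤ |a l * x j - w| + |a m * x j - w| := abs_sub _ _
            _ ≤ 2*θ := by linarith
        have h2 : δ * c < |a l - a m| * |x j| :=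
          mul_lt_mul' (hδle l m hlm) hj hcpos.le
            (lt_of_lt_of_le hδpos (hδle l m hlm))
        rw [abs_mul] at h1
        nlinarith [mul_pos hδpos hcpos]
      rw [← Finset.sum_filter]
      have : Nonempty (Fin k) := ⟨i₀⟩
      obtain ⟨l₀, hsub⟩ := Finset.card_le_one_iff_subset_singleton.mp
        (Finset.card_le_one.mpr huniq)
      calc (∑ l ∈ Finset.univ.filter (fun l : Fin k => |a l * x j - w| ≤ θ), p l)
          ≤ ∑ l ∈ {l₀}, p l :=
            Finset.sum_le_sum_of_subset_of_nonneg hsub (fun i _ _ => (hp i).le)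
        _ = p l₀ := Finset.sum_singleton _ _
        _ ≤ pmax := hpmax l₀
    set e := Equiv.funSplitAt j (Fin k) with he
    have hval : ∀ (l : Fin k) (g : {i : Fin n // i ≠ j} → Fin k) (i : Fin n),
        e.symm (l, g) i = if h : i = j then l else g ⟨i, h⟩ := by
      intro l g i
      rw [he, Equiv.funSplitAt_symm_apply]
    have hvalj : ∀ (l : Fin k) (g : {i : Fin n // i ≠ j} → Fin k),
        e.symm (l, g) j = l := fun l g => by rw [hval, dif_pos rfl]
    have hvalne : ∀ (l : Fin k) (g : {i : Fin n // i ≠ j} → Fin k)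
        (i : {i : Fin n // i ≠ j}), e.symm (l, g) i = g i := fun l g i => by
      rw [hval, dif_neg i.prop, Subtype.coe_eta]
    set W : ({i : Fin n // i ≠ j} → Fin k) → ℝ := fun g => ∏ i, p (g i) with hW
    set U : ({i : Fin n // i ≠ j} → Fin k) → ℝ := fun g => ∑ i, a (g i) * x i with hU
    have hprodf : ∀ (l : Fin k) (g : {i : Fin n // i ≠ j} → Fin k),
        (∏ i, p (e.symm (l, g) i)) = p l * W g := by
      intro l g
      rw [Fintype.prod_eq_mul_prod_compl j, hvalj]
      congr 1
      rw [Finset.prod_subtype (p := fun i : Fin n => i ≠ j) ({j}ᶜ : Finset (Fin n))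
        (fun i => by simp) (fun i => p (e.symm (l, g) i))]
      exact Finset.prod_congr rfl fun i _ => by rw [hvalne]
    have hsumf : ∀ (l : Fin k) (g : {i : Fin n // i ≠ j} → Fin k),
        (∑ i, a (e.symm (l, g) i) * x i) = a l * x j + U g := by
      intro l g
      rw [Fintype.sum_eq_add_sum_compl j, hvalj]
      congr 1
      rw [Finset.sum_subtype (p := fun i : Fin n => i ≠ j) ({j}ᶜ : Finset (Fin n))
        (fun i => by simp) (fun i => a (e.symm (l, g) i) * x i)]
      exact Finset.sum_congr rfl fun i _ => by rw [hvalne]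
    have hWnn : ∀ g, 0 ≤ W g := fun g => Finset.prod_nonneg fun i _ => (hp _).le
    have hWsum : (∑ g : {i : Fin n // i ≠ j} → Fin k, W g) = 1 := by
      rw [hW]
      rw [← Fintype.piFinset_univ, ← Finset.prod_univ_sum]
      simp [hsum]
    calc (∑ f ∈ Finset.univ.filter
          (fun f : Fin n → Fin k => |(∑ i, a (f i) * x i) - z| ≤ θ), ∏ i, p (f i))
        = ∑ f : Fin n → Fin k,
            if |(∑ i, a (f i) * x i) - z| ≤ θ then ∏ i, p (f i) else 0 :=
          Finset.sum_filter _ _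
      _ = ∑ q : Fin k × ({i : Fin n // i ≠ j} → Fin k),
            if |(∑ i, a (e.symm q i) * x i) - z| ≤ θ then ∏ i, p (e.symm q i) else 0 :=
          (Equiv.sum_comp e.symm _).symm
      _ = ∑ l : Fin k, ∑ g : {i : Fin n // i ≠ j} → Fin k,
            if |a l * x j + U g - z| ≤ θ then p l * W g else 0 := by
          rw [Fintype.sum_prod_type]
          exact Finset.sum_congr rfl fun l _ => Finset.sum_congr rfl fun g _ => by
            rw [hprodf, hsumf]
      _ = ∑ g : {i : Fin n // i ≠ j} → Fin k, W g *
            (∑ l : Fin k, if |a l * x j - (z - U g)| ≤ θ then p l else 0) := by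
          rw [Finset.sum_comm]
          refine Finset.sum_congr rfl fun g _ => ?_
          rw [Finset.mul_sum]
          refine Finset.sum_congr rfl fun l _ => ?_
          have habs : |a l * x j + U g - z| = |a l * x j - (z - U g)| := by ring_nf
          rw [habs]
          split_ifs <;> ring
      _ ≤ ∑ g : {i : Fin n // i ≠ j} → Fin k, W g * pmax := by
          refine Finset.sum_le_sum fun g _ => ?_
          exact mul_le_mul_of_nonneg_left (key _) (hWnn g)
      _ = pmax := by rw [← Finset.sum_mul, hWsum, one_mul]
  · push_neg at hbig
    classical
    have hθle : θ ≤ π/T := min_le_left _ _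
    set s_ : (Fin n → Fin k) → ℝ := fun f => ∑ i, a (f i) * x i with hs_
    set w_ : (Fin n → Fin k) → ℝ := fun f => ∏ i, p (f i) with hw_
    have hwnn : ∀ f, 0 ≤ w_ f := fun f => Finset.prod_nonneg fun i _ => (hp _).le
    have step1 : (∑ f ∈ Finset.univ.filter
          (fun f : Fin n → Fin k => |s_ f - z| ≤ θ), w_ f)
        ≤ ∑ f : Fin n → Fin k, w_ f * ((π^2/T^2) * GK T (s_ f - z)) := by
      refine le_trans (Finset.sum_le_sum ?_) (Finset.sum_le_sum_of_subset_of_nonneg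
        (Finset.filter_subset _ _) ?_)
      · intro f hf
        simp only [Finset.mem_filter, Finset.mem_univ, true_and] at hf
        have h1 : 1 ≤ (π^2/T^2) * GK T (s_ f - z) := by
          have hGK := GK_ge T (s_ f - z) hTpos (hf.trans hθle)
          calc (1:ℝ) = (π^2/T^2) * (T^2/π^2) := by field_simp
            _ ≤ (π^2/T^2) * GK T (s_ f - z) :=
                mul_le_mul_of_nonneg_left hGK (by positivity)
        exact le_mul_of_one_le_right (hwnn f) h1
      · intro f _ _
        exact mul_nonneg (hwnn f) (mul_nonneg (by positivity) (GK_nonneg T _ hTpos))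
    set φ : ℝ → ℂ := fun t => ∑ f : Fin n → Fin k,
      (w_ f : ℂ) * Complex.exp ((t * s_ f : ℝ) * Complex.I) with hφ
    have hr_le : ∀ t : ℝ, (∑ f : Fin n → Fin k, w_ f * Real.cos (t * (s_ f - z)))
        ≤ ‖φ t‖ := by
      intro t
      have hterm : ∀ f : Fin n → Fin k,
          w_ f * Real.cos (t * (s_ f - z))
            = (Complex.exp ((-(t*z) : ℝ) * Complex.I)
                * ((w_ f : ℂ) * Complex.exp ((t * s_ f : ℝ) * Complex.I))).re := by
        intro f
        have hcomb : Complex.exp ((-(t*z) : ℝ) * Complex.I)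
              * ((w_ f : ℂ) * Complex.exp ((t * s_ f : ℝ) * Complex.I))
            = (w_ f : ℂ) * Complex.exp ((t * (s_ f - z) : ℝ) * Complex.I) := by
          rw [mul_left_comm, ← Complex.exp_add]
          congr 2
          push_cast
          ring
        rw [hcomb, Complex.mul_re, Complex.ofReal_re, Complex.ofReal_im,
          Complex.exp_ofReal_mul_I_re, Complex.exp_ofReal_mul_I_im]
        ring
      calc (∑ f : Fin n → Fin k, w_ f * Real.cos (t * (s_ f - z)))
          = (Complex.exp ((-(t*z) : ℝ) * Complex.I) * φ t).re := by
            rw [hφ, Finset.mul_sum, Complex.re_sum]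
            exact Finset.sum_congr rfl fun f _ => hterm f
        _ ≤ ‖Complex.exp ((-(t*z) : ℝ) * Complex.I) * φ t‖ :=
            Complex.re_le_norm _
        _ = ‖φ t‖ := by
            rw [norm_mul, Complex.norm_exp_ofReal_mul_I, one_mul]
    have hφbound : ∀ t ∈ Set.Icc (0:ℝ) T,
        ‖φ t‖ ≤ Real.exp (-(β/2) * t^2) := by
      intro t ht
      have hfactor : φ t = ∏ i : Fin n,
          (∑ l, (p l : ℂ) * Complex.exp (((t * x i) * a l : ℝ) * Complex.I)) := by
        rw [Finset.prod_univ_sum, Fintype.piFinset_univ, hφ]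
        refine Finset.sum_congr rfl fun f _ => ?_
        rw [Finset.prod_mul_distrib]
        congr 1
        · rw [hw_, Complex.ofReal_prod]
        · rw [← Complex.exp_sum]
          congr 1
          rw [← Finset.sum_mul, ← Complex.ofReal_sum]
          congr 2
          rw [hs_, Finset.mul_sum]
          exact Finset.sum_congr rfl fun i _ => by ring
      rw [hfactor, norm_prod]
      have hpsile : ∀ i : Fin n,
          ‖∑ l, (p l : ℂ) * Complex.exp (((t * x i) * a l : ℝ) * Complex.I)‖
            ≤ Real.exp (-(2 * p i₀ * p i₁ * D^2 / π^2 * (t * x i)^2)) := by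
        intro i
        refine abs_psi_le a p hp hsum i₀ i₁ hne (t * x i) ?_
        rw [abs_mul, abs_mul]
        have h1 : |t| ≤ T := by
          rw [abs_of_nonneg ht.1]; exact ht.2
        have h2 : |t| * |x i| * |a i₀ - a i₁| ≤ T * c * |D| := by
          rw [← hD]
          have : |t| * |x i| ≤ T * c :=
            mul_le_mul h1 (hbig i) (abs_nonneg _) hTpos.le
          exact mul_le_mul_of_nonneg_right this (abs_nonneg _)
        have h3 : T * c * |D| = π := by
          rw [hc]
          field_simp
        rw [← hD] at h2 ⊢
        linarith
      refine le_trans (Finset.prod_le_prod (fun i _ => norm_nonneg _)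
        (fun i _ => hpsile i)) ?_
      rw [← Real.exp_sum]
      apply Real.exp_le_exp.mpr
      apply le_of_eq
      calc (∑ i, -(2 * p i₀ * p i₁ * D^2 / π^2 * (t * x i)^2))
          = ∑ i, (-(2 * p i₀ * p i₁ * D^2 / π^2 * t^2)) * (x i)^2 :=
            Finset.sum_congr rfl fun i _ => by ring
        _ = (-(2 * p i₀ * p i₁ * D^2 / π^2 * t^2)) * ∑ i, (x i)^2 :=
            (Finset.mul_sum _ _ _).symm
        _ = -(β/2) * t^2 := by rw [hx, hβ]; ring
    have hcont1 : Continuous (fun t : ℝ => ∑ f : Fin n → Fin k,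
        w_ f * ((1 - t/T) * Real.cos (t * (s_ f - z)))) := by fun_prop
    have hcont2 : Continuous (fun t : ℝ => Real.exp (-(β/2) * t^2)) := by fun_prop
    have hpoint : ∀ t ∈ Set.Icc (0:ℝ) T,
        (∑ f : Fin n → Fin k, w_ f * ((1 - t/T) * Real.cos (t * (s_ f - z))))
          ≤ Real.exp (-(β/2) * t^2) := by
      intro t ht
      have hfac : (∑ f : Fin n → Fin k, w_ f * ((1 - t/T) * Real.cos (t * (s_ f - z))))
          = (1 - t/T) * ∑ f : Fin n → Fin k, w_ f * Real.cos (t * (s_ f - z)) := by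
        rw [Finset.mul_sum]
        exact Finset.sum_congr rfl fun f _ => by ring
      rw [hfac]
      have hfr : (1 - t/T) ≤ 1 := by
        have : 0 ≤ t/T := div_nonneg ht.1 hTpos.le
        linarith
      have hfr0 : 0 ≤ 1 - t/T := by
        have : t/T ≤ 1 := (div_le_one hTpos).mpr ht.2
        linarith
      rcases le_or_gt 0 (∑ f : Fin n → Fin k, w_ f * Real.cos (t * (s_ f - z))) with hr | hr
      · calc (1 - t/T) * (∑ f : Fin n → Fin k, w_ f * Real.cos (t * (s_ f - z)))
            ≤ 1 * (∑ f : Fin n → Fin k, w_ f * Real.cos (t * (s_ f - z))) :=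
              mul_le_mul_of_nonneg_right hfr hr
          _ = ∑ f : Fin n → Fin k, w_ f * Real.cos (t * (s_ f - z)) := one_mul _
          _ ≤ ‖φ t‖ := hr_le t
          _ ≤ Real.exp (-(β/2)*t^2) := hφbound t ht
      · exact (mul_nonpos_of_nonneg_of_nonpos hfr0 hr.le).trans (Real.exp_pos _).le
    have step3 : (∑ f : Fin n → Fin k, w_ f *
          ∫ t in (0:ℝ)..T, (1 - t/T) * Real.cos (t * (s_ f - z))) ≤ S9 / 2 := by
      have heq : (∑ f : Fin n → Fin k, w_ f *
            ∫ t in (0:ℝ)..T, (1 - t/T) * Real.cos (t * (s_ f - z)))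
          = ∫ t in (0:ℝ)..T, ∑ f : Fin n → Fin k,
              w_ f * ((1 - t/T) * Real.cos (t * (s_ f - z))) := by
        rw [intervalIntegral.integral_finset_sum (fun f _ =>
          ((by fun_prop : Continuous fun t : ℝ =>
            w_ f * ((1 - t/T) * Real.cos (t * (s_ f - z)))).intervalIntegrable 0 T))]
        exact Finset.sum_congr rfl fun f _ => (intervalIntegral.integral_const_mul _ _).symm
      rw [heq]
      have hmono := intervalIntegral.integral_mono_on (μ := MeasureTheory.volume) hTpos.le
        (hcont1.intervalIntegrable 0 T) (hcont2.intervalIntegrable 0 T) hpoint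
      have hgauss : (∫ t in (0:ℝ)..T, Real.exp (-(β/2) * t^2)) ≤ S9 / 2 := by
        rw [intervalIntegral.integral_of_le hTpos.le]
        have hig : MeasureTheory.IntegrableOn (fun t : ℝ => Real.exp (-(β/2) * t^2))
            (Set.Ioi 0) :=
          (integrable_exp_neg_mul_sq (by positivity : (0:ℝ) < β/2)).integrableOn
        have hsub : (∫ t in Set.Ioc (0:ℝ) T, Real.exp (-(β/2) * t^2))
            ≤ ∫ t in Set.Ioi (0:ℝ), Real.exp (-(β/2) * t^2) :=
          MeasureTheory.setIntegral_mono_set hig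
            (Filter.Eventually.of_forall fun t => (Real.exp_pos _).le)
            (HasSubset.Subset.eventuallyLE Set.Ioc_subset_Ioi_self)
        refine hsub.trans ?_
        rw [integral_gaussian_Ioi (β/2), hS9]
        apply le_of_eq
        congr 1
        rw [show π/(β/2) = 2*π/β by rw [div_div_eq_mul_div, mul_comm]]
      linarith
    calc (∑ f ∈ Finset.univ.filter
          (fun f : Fin n → Fin k => |s_ f - z| ≤ θ), w_ f)
        ≤ ∑ f : Fin n → Fin k, w_ f * ((π^2/T^2) * GK T (s_ f - z)) := step1
      _ = (π^2/(2*T)) * ∑ f : Fin n → Fin k, w_ f *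
            ∫ t in (0:ℝ)..T, (1 - t/T) * Real.cos (t * (s_ f - z)) := by
          rw [Finset.mul_sum]
          refine Finset.sum_congr rfl fun f _ => ?_
          rw [fejer_integral T hTpos (s_ f - z)]
          ring
      _ ≤ (π^2/(2*T)) * (S9/2) := mul_le_mul_of_nonneg_left step3 (by positivity)
      _ = pmax := by
          rw [hT]
          exact final_algebra (π^2) S9 pmax (by positivity) hS9pos.ne' hpm.ne'

open MeasureTheory ProbabilityTheory

lemma ofReal_prod_aux {α : Type*} (s : Finset α) (g : α → ℝ) (h : ∀ i ∈ s, 0 ≤ g i) :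
    ∏ i ∈ s, ENNReal.ofReal (g i) = ENNReal.ofReal (∏ i ∈ s, g i) := by
  induction s using Finset.cons_induction with
  | empty => simp
  | cons a s ha ih =>
      rw [Finset.prod_cons, Finset.prod_cons,
        ih (fun i hi => h i (Finset.mem_cons_of_mem hi)),
        ← ENNReal.ofReal_mul (h a (Finset.mem_cons_self _ _))]

/-- There is `θ = θ(ξ) > 0` such that for every unit vector `x`, the Lévy concentration
of `∑ bᵢxᵢ` at scale `θ` is at most `‖p‖_∞`, for `bᵢ` i.i.d. copies of `ξ`. -/
theorem stmt_10 {k : ℕ} (hk : 2 ≤ k) (a : Fin k → ℝ) (ha : Function.Injective a)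
    (p : Fin k → ℝ) (hp : ∀ i, 0 < p i) (hsum : ∑ i, p i = 1)
    (pmax : ℝ) (hpmax : ∀ i, p i ≤ pmax) (hpmax' : ∃ i, p i = pmax) :
    ∃ θ : ℝ, 0 < θ ∧
      ∀ (n : ℕ) (Ω : Type) (_ : MeasurableSpace Ω) (μ : Measure Ω),
        IsProbabilityMeasure μ →
        ∀ b : Fin n → Ω → ℝ, (∀ i, Measurable (b i)) →
        iIndepFun b μ →
        (∀ i l, μ {ω | b i ω = a l} = ENNReal.ofReal (p l)) →
        (∀ i, μ {ω | b i ω ∈ Set.range a} = 1) →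
        ∀ x : Fin n → ℝ, (∑ i, (x i) ^ 2 = 1) →
        ∀ z : ℝ, μ {ω | |(∑ i, b i ω * x i) - z| ≤ θ} ≤ ENNReal.ofReal pmax := by
  classical
  obtain ⟨θ, hθpos, hmain⟩ := finite_bound hk a ha p hp hsum pmax hpmax
  refine ⟨θ, hθpos, ?_⟩
  intro n Ω mΩ μ hprob b hb hind hatom hrange x hx z
  set good : Finset (Fin n → Fin k) := Finset.univ.filter
    (fun f : Fin n → Fin k => |(∑ i, a (f i) * x i) - z| ≤ θ) with hgood
  set A : (Fin n → Fin k) → Set Ω := fun f => ⋂ i, (b i)⁻¹' {a (f i)} with hA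
  have hAf : ∀ f : Fin n → Fin k, μ (A f) = ENNReal.ofReal (∏ i, p (f i)) := by
    intro f
    rw [hA]
    rw [hind.meas_iInter (fun i => ⟨{a (f i)}, measurableSet_singleton _, rfl⟩)]
    rw [← ofReal_prod_aux _ _ (fun i _ => (hp _).le)]
    refine Finset.prod_congr rfl fun i _ => ?_
    rw [← hatom i (f i)]
    congr 1
  have hnull : μ (⋃ i, ((b i)⁻¹' (Set.range a))ᶜ) = 0 := by
    refine measure_iUnion_null fun i => ?_
    have hms : MeasurableSet ((b i)⁻¹' (Set.range a)) :=
      hb i (Set.finite_range a).measurableSet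
    have h1 : μ ((b i)⁻¹' (Set.range a)) = 1 := hrange i
    exact (prob_compl_eq_zero_iff hms).mpr h1
  have hsubset : {ω | |(∑ i, b i ω * x i) - z| ≤ θ}
      ⊆ (⋃ f ∈ good, A f) ∪ (⋃ i, ((b i)⁻¹' (Set.range a))ᶜ) := by
    intro ω hω
    by_cases hΩ0 : ∀ i, b i ω ∈ Set.range a
    · left
      choose g hg using hΩ0
      have hgg : ∀ i, b i ω = a (g i) := fun i => (hg i).symm
      have hgmem : g ∈ good := by
        rw [hgood, Finset.mem_filter]
        refine ⟨Finset.mem_univ _, ?_⟩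
        have : (∑ i, a (g i) * x i) = ∑ i, b i ω * x i :=
          Finset.sum_congr rfl fun i _ => by rw [hgg i]
        rw [this]
        exact hω
      refine Set.mem_biUnion hgmem ?_
      rw [hA]
      exact Set.mem_iInter.mpr fun i => by
        simp only [Set.mem_preimage, Set.mem_singleton_iff]
        exact hgg i
    · push_neg at hΩ0
      obtain ⟨i, hi⟩ := hΩ0
      right
      exact Set.mem_iUnion.mpr ⟨i, hi⟩
  calc μ {ω | |(∑ i, b i ω * x i) - z| ≤ θ}
      ≤ μ ((⋃ f ∈ good, A f) ∪ (⋃ i, ((b i)⁻¹' (Set.range a))ᶜ)) := measure_mono hsubset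
    _ ≤ μ (⋃ f ∈ good, A f) + μ (⋃ i, ((b i)⁻¹' (Set.range a))ᶜ) := measure_union_le _ _
    _ = μ (⋃ f ∈ good, A f) := by rw [hnull, add_zero]
    _ ≤ ∑ f ∈ good, μ (A f) := measure_biUnion_finset_le _ _
    _ = ∑ f ∈ good, ENNReal.ofReal (∏ i, p (f i)) :=
        Finset.sum_congr rfl fun f _ => hAf f
    _ = ENNReal.ofReal (∑ f ∈ good, ∏ i, p (f i)) :=
        (ENNReal.ofReal_sum_of_nonneg fun f _ =>
          Finset.prod_nonneg fun i _ => (hp _).le).symm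
    _ ≤ ENNReal.ofReal pmax := ENNReal.ofReal_le_ofReal (hmain n x hx z)
end

section
/- Randomized rounding preserving anticoncentration: let y ∈ ℝⁿ, μ > 0, λ ∈ ℝ, and let Δ be a probability distribution on [−s,s]ⁿ. Suppose P[|∑ b_i y_i − λ| ≤ t] ≤ μt for all t ≥ √n, where b ∼ Δ. Then there exist constants c, C > 0 depending only on s and an integer vector y' ∈ ℤⁿ such that (1) ‖y − y'‖_∞ ≤ 1; (2) P[|∑ b_i y'_i − λ| ≤ t] ≤ Cμt for all t ≥ √n; (3) sup_z P[|∑ b_i y'_i − z| ≤ √n] ≥ c · sup_z P[|∑ b_i y_i − z| ≤ √n]; (4) |∑ y_i − ∑ y'_i| ≤ C√n. -/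
open MeasureTheory ProbabilityTheory Finset
open scoped ENNReal NNReal

section aux
variable {n : ℕ} (θ : Fin n → ℝ)

/-- Weight of a rounding pattern. -/
def wgt (ε : Fin n → Bool) : ℝ := ∏ i, if ε i then θ i else 1 - θ i

/-- Rounding offset. -/
def roff (ε : Fin n → Bool) (i : Fin n) : ℝ := (if ε i then (1:ℝ) else 0) - θ i

lemma sum_prod_bool (f : Fin n → Bool → ℝ) :
    ∑ ε : Fin n → Bool, ∏ i, f i (ε i) = ∏ i, (f i false + f i true) := by
  classical
  have h := Finset.prod_univ_sum (fun _ : Fin n => (Finset.univ : Finset Bool)) f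
  rw [Fintype.piFinset_univ] at h
  rw [← h]
  congr 1
  ext i
  simp [Fintype.sum_bool]
  ring

lemma wgt_nonneg (hθ0 : ∀ i, 0 ≤ θ i) (hθ1 : ∀ i, θ i ≤ 1) (ε : Fin n → Bool) :
    0 ≤ wgt θ ε := by
  apply Finset.prod_nonneg
  intro i _
  by_cases h : ε i <;> simp [h, hθ0 i, hθ1 i, sub_nonneg]

lemma sum_wgt_mul_prod (g : Fin n → Bool → ℝ) :
    ∑ ε : Fin n → Bool, wgt θ ε * ∏ i, g i (ε i)
      = ∏ i, ((1 - θ i) * g i false + θ i * g i true) := by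
  classical
  have : ∀ ε : Fin n → Bool, wgt θ ε * ∏ i, g i (ε i)
      = ∏ i, ((if ε i then θ i else 1 - θ i) * g i (ε i)) := by
    intro ε; rw [wgt, ← Finset.prod_mul_distrib]
  rw [Finset.sum_congr rfl (fun ε _ => this ε),
    sum_prod_bool (fun i b => (if b then θ i else 1 - θ i) * g i b)]
  simp

lemma sum_wgt : ∑ ε : Fin n → Bool, wgt θ ε = 1 := by
  have h := sum_wgt_mul_prod θ (fun _ _ => (1:ℝ))
  simpa using h

lemma exp_single (i : Fin n) (G : Bool → ℝ) :
    ∑ ε : Fin n → Bool, wgt θ ε * G (ε i)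
      = (1 - θ i) * G false + θ i * G true := by
  classical
  have h := sum_wgt_mul_prod θ (fun k b => if k = i then G b else 1)
  have h1 : ∀ ε : Fin n → Bool, (∏ k, if k = i then G (ε k) else 1) = G (ε i) := by
    intro ε
    rw [Finset.prod_eq_single i (fun k _ hk => by simp [hk]) (by simp)]
    simp
  have h2 : (∏ k, ((1 - θ k) * (if k = i then G false else 1)
      + θ k * (if k = i then G true else 1)))
      = (1 - θ i) * G false + θ i * G true := by
    rw [Finset.prod_eq_single i (fun k _ hk => by simp [hk]) (by simp)]
    simp
  rw [← h2, ← h]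
  apply Finset.sum_congr rfl
  intro ε _
  rw [h1 ε]

lemma exp_pair (i j : Fin n) (hij : i ≠ j) (G H : Bool → ℝ) :
    ∑ ε : Fin n → Bool, wgt θ ε * (G (ε i) * H (ε j))
      = ((1 - θ i) * G false + θ i * G true) * ((1 - θ j) * H false + θ j * H true) := by
  classical
  have h := sum_wgt_mul_prod θ (fun k b => if k = i then G b else if k = j then H b else 1)
  have h1 : ∀ ε : Fin n → Bool,
      (∏ k, if k = i then G (ε k) else if k = j then H (ε k) else 1) = G (ε i) * H (ε j) := by
    intro ε
    rw [← Finset.mul_prod_erase Finset.univ _ (Finset.mem_univ i)]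
    rw [← Finset.mul_prod_erase _ _ (Finset.mem_erase.2 ⟨Ne.symm hij, Finset.mem_univ j⟩)]
    rw [Finset.prod_eq_one (fun k hk => by
      simp only [Finset.mem_erase] at hk
      simp [hk.1, hk.2.1])]
    simp [hij.symm, if_neg (Ne.symm hij)]
  have h2 : (∏ k, ((1 - θ k) * (if k = i then G false else if k = j then H false else 1)
      + θ k * (if k = i then G true else if k = j then H true else 1)))
      = ((1 - θ i) * G false + θ i * G true) * ((1 - θ j) * H false + θ j * H true) := by
    rw [← Finset.mul_prod_erase Finset.univ _ (Finset.mem_univ i)]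
    rw [← Finset.mul_prod_erase _ _ (Finset.mem_erase.2 ⟨Ne.symm hij, Finset.mem_univ j⟩)]
    rw [Finset.prod_eq_one (fun k hk => by
      simp only [Finset.mem_erase] at hk
      simp [hk.1, hk.2.1])]
    simp [hij.symm, if_neg (Ne.symm hij)]
  rw [← h2, ← h]
  apply Finset.sum_congr rfl
  intro ε _
  rw [h1 ε]

lemma moment (hθ0 : ∀ i, 0 ≤ θ i) (hθ1 : ∀ i, θ i ≤ 1) (a : Fin n → ℝ) :
    ∑ ε : Fin n → Bool, wgt θ ε * (∑ i, a i * roff θ ε i)^2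
      ≤ (∑ i, (a i)^2) / 4 := by
  classical
  have expand : ∀ ε : Fin n → Bool, wgt θ ε * (∑ i, a i * roff θ ε i)^2
      = ∑ i, ∑ j, (a i * a j) * (wgt θ ε * (roff θ ε i * roff θ ε j)) := by
    intro ε
    rw [sq, Finset.sum_mul_sum]
    rw [Finset.mul_sum]
    apply Finset.sum_congr rfl; intro i _
    rw [Finset.mul_sum]
    apply Finset.sum_congr rfl; intro j _
    ring
  rw [Finset.sum_congr rfl (fun ε _ => expand ε)]
  rw [Finset.sum_comm]
  have swap : ∀ i : Fin n, (∑ ε : Fin n → Bool, ∑ j, (a i * a j) * (wgt θ ε * (roff θ ε i * roff θ ε j)))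
      = ∑ j, (a i * a j) * (∑ ε : Fin n → Bool, wgt θ ε * (roff θ ε i * roff θ ε j)) := by
    intro i
    rw [Finset.sum_comm]
    apply Finset.sum_congr rfl; intro j _
    rw [← Finset.mul_sum]
  rw [Finset.sum_congr rfl (fun i _ => swap i)]
  have key : ∀ i j : Fin n, (∑ ε : Fin n → Bool, wgt θ ε * (roff θ ε i * roff θ ε j))
      = if i = j then θ i * (1 - θ i) else 0 := by
    intro i j
    by_cases hij : i = j
    · subst hij
      simp only [if_pos rfl]
      have : ∀ ε : Fin n → Bool, roff θ ε i * roff θ ε i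
          = (fun b => ((if b then (1:ℝ) else 0) - θ i) * ((if b then (1:ℝ) else 0) - θ i)) (ε i) := by
        intro ε; simp [roff]
      rw [Finset.sum_congr rfl (fun ε _ => by rw [this ε])]
      rw [exp_single θ i (fun b => ((if b then (1:ℝ) else 0) - θ i) * ((if b then (1:ℝ) else 0) - θ i))]
      simp
      ring
    · rw [if_neg hij]
      have : ∀ ε : Fin n → Bool, roff θ ε i * roff θ ε j
          = (fun b => (if b then (1:ℝ) else 0) - θ i) (ε i) * (fun b => (if b then (1:ℝ) else 0) - θ j) (ε j) := by
        intro ε; simp [roff]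
      rw [Finset.sum_congr rfl (fun ε _ => by rw [this ε])]
      rw [exp_pair θ i j hij (fun b => (if b then (1:ℝ) else 0) - θ i) (fun b => (if b then (1:ℝ) else 0) - θ j)]
      simp
      left; ring
  calc ∑ i, ∑ j, (a i * a j) * (∑ ε : Fin n → Bool, wgt θ ε * (roff θ ε i * roff θ ε j))
      = ∑ i, (a i)^2 * (θ i * (1 - θ i)) := by
        apply Finset.sum_congr rfl; intro i _
        rw [Finset.sum_congr rfl (fun j _ => by rw [key i j])]
        rw [Finset.sum_eq_single i (fun j _ hj => by rw [if_neg (Ne.symm hj), mul_zero]) (by simp)]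
        simp [sq]
    _ ≤ ∑ i, (a i)^2 * (1/4) := by
        apply Finset.sum_le_sum; intro i _
        apply mul_le_mul_of_nonneg_left _ (sq_nonneg _)
        nlinarith [hθ0 i, hθ1 i, sq_nonneg (θ i - 1/2)]
    _ = (∑ i, (a i)^2) / 4 := by
        rw [Finset.sum_div]; exact Finset.sum_congr rfl (fun i _ => by ring)

lemma cheb (hθ0 : ∀ i, 0 ≤ θ i) (hθ1 : ∀ i, θ i ≤ 1) (a : Fin n → ℝ) (u : ℝ) (hu : 0 < u) :
    ∑ ε ∈ Finset.univ.filter (fun ε : Fin n → Bool => u < |∑ i, a i * roff θ ε i|), wgt θ ε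
      ≤ (∑ i, (a i)^2) / (4 * u^2) := by
  classical
  have h1 : ∀ ε ∈ Finset.univ.filter (fun ε : Fin n → Bool => u < |∑ i, a i * roff θ ε i|),
      wgt θ ε ≤ wgt θ ε * (∑ i, a i * roff θ ε i)^2 / u^2 := by
    intro ε hε
    rw [Finset.mem_filter] at hε
    have h2 : u^2 ≤ (∑ i, a i * roff θ ε i)^2 := by
      have := hε.2
      calc u^2 ≤ |∑ i, a i * roff θ ε i|^2 := by
            apply pow_le_pow_left₀ hu.le this.le
        _ = (∑ i, a i * roff θ ε i)^2 := sq_abs _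
    have hw := wgt_nonneg θ hθ0 hθ1 ε
    rw [le_div_iff₀ (by positivity)]
    calc wgt θ ε * u^2 ≤ wgt θ ε * (∑ i, a i * roff θ ε i)^2 :=
          mul_le_mul_of_nonneg_left h2 hw
      _ = _ := rfl
  calc ∑ ε ∈ Finset.univ.filter (fun ε : Fin n → Bool => u < |∑ i, a i * roff θ ε i|), wgt θ ε
      ≤ ∑ ε ∈ Finset.univ.filter (fun ε : Fin n → Bool => u < |∑ i, a i * roff θ ε i|),
          wgt θ ε * (∑ i, a i * roff θ ε i)^2 / u^2 := Finset.sum_le_sum h1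
    _ ≤ ∑ ε : Fin n → Bool, wgt θ ε * (∑ i, a i * roff θ ε i)^2 / u^2 := by
        apply Finset.sum_le_sum_of_subset_of_nonneg (Finset.filter_subset _ _)
        intro ε _ _
        have := wgt_nonneg θ hθ0 hθ1 ε
        positivity
    _ = (∑ ε : Fin n → Bool, wgt θ ε * (∑ i, a i * roff θ ε i)^2) / u^2 := by
        rw [← Finset.sum_div]
    _ ≤ ((∑ i, (a i)^2) / 4) / u^2 := by
        gcongr
        exact moment θ hθ0 hθ1 a
    _ = (∑ i, (a i)^2) / (4 * u^2) := by rw [div_div]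

end aux

lemma exists_dyadic (σ d : ℝ) (hσ : 0 < σ) (hd : 2 * σ < d) :
    ∃ k : ℕ, 1 ≤ k ∧ 2^k * σ < d ∧ d ≤ 2^(k+1) * σ := by
  have hex : ∃ K : ℕ, d ≤ 2^(K+1) * σ := by
    obtain ⟨K, hK⟩ := pow_unbounded_of_one_lt (d / σ) (one_lt_two (α := ℝ))
    refine ⟨K, ?_⟩
    have h1 : d < 2^K * σ := by rw [div_lt_iff₀ hσ] at hK; linarith
    have h2 : (2:ℝ)^K * σ ≤ 2^(K+1) * σ := by
      apply mul_le_mul_of_nonneg_right (pow_le_pow_right₀ one_le_two (Nat.le_succ K)) hσ.le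
    linarith
  classical
  let k := Nat.find hex
  have hk1 : d ≤ 2^(k+1) * σ := Nat.find_spec hex
  have hkpos : 1 ≤ k := by
    rcases Nat.eq_zero_or_pos k with h0 | h1
    · exfalso
      rw [h0] at hk1
      norm_num at hk1
      linarith
    · exact h1
  have hk2 : 2^k * σ < d := by
    have := Nat.find_min hex (m := k - 1) (by omega)
    push_neg at this
    have hke : k - 1 + 1 = k := by omega
    rwa [hke] at this
  exact ⟨k, hkpos, hk2, hk1⟩

lemma cover_aux (σ : ℝ) (hσ : 0 < σ) (m : ℕ) (hm : 1 ≤ m) (d : ℝ) (hd : |d| ≤ m * σ) :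
    ∃ i ∈ Finset.range m, |d - (2*(i:ℝ)+1-m) * σ| ≤ σ := by
  set u : ℝ := (d + m * σ) / (2 * σ) with hu
  have hu0 : 0 ≤ u := by
    apply div_nonneg _ (by linarith)
    have := abs_le.1 hd
    linarith [this.1]
  have hum : u ≤ m := by
    rw [hu, div_le_iff₀ (by linarith)]
    have := abs_le.1 hd
    nlinarith [this.2]
  have hdu : d = (2*u - m) * σ := by
    rw [hu]; field_simp; ring
  set i : ℕ := min (m-1) ⌊u⌋₊ with hi
  refine ⟨i, Finset.mem_range.2 (by omega), ?_⟩
  have hbound : (i:ℝ) ≤ u ∧ u ≤ (i:ℝ) + 1 := by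
    rcases le_or_gt ⌊u⌋₊ (m-1) with h | h
    · have hieq : i = ⌊u⌋₊ := by omega
      rw [hieq]
      exact ⟨Nat.floor_le hu0, (Nat.lt_floor_add_one u).le⟩
    · have hieq : i = m - 1 := by omega
      have hmu : (m:ℝ) ≤ u := by
        have h1 : (m:ℝ) ≤ (⌊u⌋₊ : ℝ) := by exact_mod_cast (by omega : m ≤ ⌊u⌋₊)
        exact h1.trans (Nat.floor_le hu0)
      have hcast : ((i:ℕ):ℝ) = (m:ℝ) - 1 := by
        rw [hieq]; push_cast [Nat.cast_sub hm]; ring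
      rw [hcast]
      constructor <;> linarith
  rw [hdu]
  have : (2*u - m) * σ - (2*(i:ℝ)+1-m) * σ = (2*(u - i) - 1) * σ := by ring
  rw [this, abs_mul, abs_of_pos hσ]
  have h1 : |2*(u - (i:ℝ)) - 1| ≤ 1 := by
    rw [abs_le]; constructor <;> nlinarith [hbound.1, hbound.2]
  nlinarith

set_option maxHeartbeats 3000000 in
/-- Randomized rounding preserving anticoncentration: there exist `c, C > 0` depending
only on `s` such that for any `y ∈ ℝⁿ`, `μ₀ > 0`, `λ ∈ ℝ` and any distribution `Δ`
supported in `[-s,s]ⁿ` with `P[|∑ bᵢyᵢ - λ| ≤ t] ≤ μ₀ t` for all `t ≥ √n`, there is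
`y' ∈ ℤⁿ` with (1) `‖y - y'‖_∞ ≤ 1`; (2) `P[|∑ bᵢy'ᵢ - λ| ≤ t] ≤ Cμ₀t` for `t ≥ √n`;
(3) `L(∑ bᵢy'ᵢ, √n) ≥ c·L(∑ bᵢyᵢ, √n)`; (4) `|∑ yᵢ - ∑ y'ᵢ| ≤ C√n`. -/
theorem stmt_11 (s : ℝ) (hs : 0 < s) :
    ∃ c C : ℝ, 0 < c ∧ 0 < C ∧
      ∀ (n : ℕ), 0 < n →
      ∀ Δ : Measure (Fin n → ℝ), IsProbabilityMeasure Δ →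
      (∀ᵐ b ∂Δ, ∀ i, |b i| ≤ s) →
      ∀ (y : Fin n → ℝ) (μ₀ lam : ℝ), 0 < μ₀ →
      (∀ t : ℝ, Real.sqrt n ≤ t →
        Δ {b | |(∑ i, b i * y i) - lam| ≤ t} ≤ ENNReal.ofReal (μ₀ * t)) →
      ∃ y' : Fin n → ℤ,
        (∀ i, |y i - (y' i : ℝ)| ≤ 1) ∧
        (∀ t : ℝ, Real.sqrt n ≤ t →
          Δ {b | |(∑ i, b i * (y' i : ℝ)) - lam| ≤ t} ≤ ENNReal.ofReal (C * μ₀ * t)) ∧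
        (ENNReal.ofReal c * ⨆ z : ℝ, Δ {b | |(∑ i, b i * y i) - z| ≤ Real.sqrt n} ≤
          ⨆ z : ℝ, Δ {b | |(∑ i, b i * (y' i : ℝ)) - z| ≤ Real.sqrt n}) ∧
        |(∑ i, y i) - (∑ i, (y' i : ℝ))| ≤ C * Real.sqrt n := by
  classical
  refine ⟨1/(4*((⌈s⌉₊:ℝ)+1)), 16*s^2+4, by positivity, by positivity, ?_⟩
  intro n hn Δ hΔ hbs y μ₀ lam hμ₀ hyp
  set σ : ℝ := Real.sqrt n with hσdef
  have hσ : 0 < σ := Real.sqrt_pos.2 (by exact_mod_cast hn)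
  have hσ2 : σ^2 = n := Real.sq_sqrt (by positivity)
  set θ : Fin n → ℝ := fun i => Int.fract (y i) with hθdef
  have hθ0 : ∀ i, 0 ≤ θ i := fun i => Int.fract_nonneg _
  have hθ1 : ∀ i, θ i ≤ 1 := fun i => (Int.fract_lt_one _).le
  set Y : (Fin n → Bool) → Fin n → ℤ := fun ε i => ⌊y i⌋ + (if ε i then 1 else 0) with hYdef
  have hYval : ∀ (ε : Fin n → Bool) (i : Fin n), ((Y ε i : ℤ) : ℝ) = y i + roff θ ε i := by
    intro ε i
    have hfl : (⌊y i⌋ : ℝ) = y i - θ i := by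
      rw [hθdef]
      simp [Int.self_sub_fract]
    by_cases h : ε i <;> simp [hYdef, roff, h, hfl] <;> ring
  set S : (Fin n → ℝ) → ℝ := fun b => ∑ i, b i * y i with hSdef
  set X : (Fin n → ℝ) → (Fin n → Bool) → ℝ := fun b ε => ∑ i, b i * roff θ ε i with hXdef
  have hS' : ∀ (b : Fin n → ℝ) (ε : Fin n → Bool),
      (∑ i, b i * ((Y ε i : ℤ) : ℝ)) = S b + X b ε := by
    intro b ε
    rw [hSdef, hXdef]
    simp only
    rw [← Finset.sum_add_distrib]
    apply Finset.sum_congr rfl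
    intro i _
    rw [hYval ε i]
    ring
  have measS : Measurable S := by
    apply Finset.measurable_sum
    intro i _
    exact (measurable_pi_apply i).mul_const _
  have measX : ∀ ε, Measurable (fun b => X b ε) := by
    intro ε
    apply Finset.measurable_sum
    intro i _
    exact (measurable_pi_apply i).mul_const _
  -- the rounding measure
  set P : Measure (Fin n → Bool) :=
    ∑ ε ∈ Finset.univ, (ENNReal.ofReal (wgt θ ε)) • Measure.dirac ε with hPdef
  have hPlint : ∀ F : (Fin n → Bool) → ℝ≥0∞,
      ∫⁻ ε, F ε ∂P = ∑ ε : Fin n → Bool, ENNReal.ofReal (wgt θ ε) * F ε := by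
    intro F
    rw [hPdef, lintegral_finset_sum_measure]
    apply Finset.sum_congr rfl
    intro ε _
    rw [lintegral_smul_measure, lintegral_dirac, smul_eq_mul]
  have hPapply : ∀ A : Set (Fin n → Bool),
      P A = ENNReal.ofReal (∑ ε ∈ Finset.univ.filter (fun ε => ε ∈ A), wgt θ ε) := by
    intro A
    have h1 : P A = ∫⁻ ε, A.indicator 1 ε ∂P := by
      rw [lintegral_indicator_one MeasurableSet.of_discrete]
    rw [h1, hPlint, ENNReal.ofReal_sum_of_nonneg (fun ε _ => wgt_nonneg θ hθ0 hθ1 ε),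
      Finset.sum_filter]
    apply Finset.sum_congr rfl
    intro ε _
    by_cases h : ε ∈ A <;> simp [h]
  have hPuniv : P Set.univ = 1 := by
    rw [hPapply]
    simp only [Set.mem_univ, Finset.filter_true]
    rw [sum_wgt θ]
    simp
  have markov : ∀ (F : (Fin n → Bool) → ℝ≥0∞) (a p : ℝ≥0∞), a ≠ 0 → a ≠ ⊤ →
      (∫⁻ ε, F ε ∂P) ≤ a * p → P {ε | a ≤ F ε} ≤ p := by
    intro F a p ha0 hatop hEF
    have h1 : a * P {ε | a ≤ F ε} ≤ a * p :=
      le_trans (mul_meas_ge_le_lintegral₀ (Measurable.of_discrete).aemeasurable a) hEF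
    exact (ENNReal.mul_le_mul_iff_right ha0 hatop).1 h1
  have swapX : ∀ (A : Set (Fin n → ℝ)) (u : ℝ), MeasurableSet A → 0 < u →
      ∫⁻ ε, Δ (A ∩ {b | u < |X b ε|}) ∂P
        ≤ Δ A * ENNReal.ofReal (s^2 * n / (4 * u^2)) := by
    intro A u hA hu
    have hmeasB : ∀ ε : Fin n → Bool, MeasurableSet {b : Fin n → ℝ | u < |X b ε|} := by
      intro ε
      exact measurableSet_lt measurable_const (measX ε).abs
    rw [hPlint]
    have step1 : ∀ ε : Fin n → Bool, Δ (A ∩ {b | u < |X b ε|})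
        = ∫⁻ b, (A ∩ {b | u < |X b ε|}).indicator 1 b ∂Δ := by
      intro ε
      rw [lintegral_indicator_one (hA.inter (hmeasB ε))]
    calc ∑ ε : Fin n → Bool, ENNReal.ofReal (wgt θ ε) * Δ (A ∩ {b | u < |X b ε|})
        = ∑ ε : Fin n → Bool, ∫⁻ b,
            ENNReal.ofReal (wgt θ ε) * (A ∩ {b | u < |X b ε|}).indicator 1 b ∂Δ := by
          apply Finset.sum_congr rfl
          intro ε _
          rw [step1 ε, lintegral_const_mul _ (measurable_one.indicator (hA.inter (hmeasB ε)))]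
      _ = ∫⁻ b, ∑ ε : Fin n → Bool,
            ENNReal.ofReal (wgt θ ε) * (A ∩ {b | u < |X b ε|}).indicator 1 b ∂Δ := by
          rw [lintegral_finset_sum]
          intro ε _
          exact (measurable_one.indicator (hA.inter (hmeasB ε))).const_mul _
      _ ≤ ∫⁻ b, A.indicator (fun _ => ENNReal.ofReal (s^2 * n / (4 * u^2))) b ∂Δ := by
          apply lintegral_mono_ae
          filter_upwards [hbs] with b hb
          by_cases hbA : b ∈ A
          · rw [Set.indicator_of_mem hbA]
            have hind : ∀ ε : Fin n → Bool, (A ∩ {b' | u < |X b' ε|}).indicator (1 : (Fin n → ℝ) → ℝ≥0∞) b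
                = if u < |X b ε| then 1 else 0 := by
              intro ε
              by_cases h : u < |X b ε| <;> simp [Set.indicator, hbA, h]
            calc ∑ ε : Fin n → Bool,
                  ENNReal.ofReal (wgt θ ε) * (A ∩ {b' | u < |X b' ε|}).indicator 1 b
                = ∑ ε ∈ Finset.univ.filter (fun ε : Fin n → Bool => u < |X b ε|),
                    ENNReal.ofReal (wgt θ ε) := by
                  rw [Finset.sum_filter]
                  apply Finset.sum_congr rfl
                  intro ε _
                  rw [hind ε]
                  by_cases h : u < |X b ε| <;> simp [h]
              _ = ENNReal.ofReal (∑ ε ∈ Finset.univ.filter (fun ε : Fin n → Bool => u < |X b ε|),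
                    wgt θ ε) :=
                  (ENNReal.ofReal_sum_of_nonneg (fun ε _ => wgt_nonneg θ hθ0 hθ1 ε)).symm
              _ ≤ ENNReal.ofReal (s^2 * n / (4 * u^2)) := by
                  apply ENNReal.ofReal_le_ofReal
                  have hch := cheb θ hθ0 hθ1 b u hu
                  refine le_trans hch ?_
                  have hsum : (∑ i, (b i)^2) ≤ s^2 * n := by
                    calc (∑ i, (b i)^2) ≤ ∑ _i : Fin n, s^2 := by
                          apply Finset.sum_le_sum
                          intro i _
                          have h1 := abs_le.1 (hb i)
                          nlinarith [h1.1, h1.2]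
                      _ = s^2 * n := by simp [mul_comm]
                  gcongr
          · have : ∀ ε : Fin n → Bool, (A ∩ {b' | u < |X b' ε|}).indicator (1 : (Fin n → ℝ) → ℝ≥0∞) b = 0 := by
              intro ε
              apply Set.indicator_of_notMem
              exact fun hmem => hbA hmem.1
            rw [Set.indicator_of_notMem hbA]
            simp [this]
      _ = Δ A * ENNReal.ofReal (s^2 * n / (4 * u^2)) := by
          rw [lintegral_indicator hA, setLIntegral_const, mul_comm]
  -- dyadic layers
  set LL : ℕ → Set (Fin n → ℝ) :=
    fun r => {b | 2^(r+1)*σ < |S b - lam| ∧ |S b - lam| ≤ 2^(r+2)*σ} with hLLdef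
  set BB : ℕ → (Fin n → Bool) → Set (Fin n → ℝ) :=
    fun r ε => {b | 2^r*σ < |X b ε|} with hBBdef
  set H : (Fin n → Bool) → ℝ≥0∞ := fun ε => ∑' r : ℕ, Δ (LL r ∩ BB r ε) with hHdef
  have measLL : ∀ r : ℕ, MeasurableSet (LL r) := by
    intro r
    have h1 : MeasurableSet {b : Fin n → ℝ | 2^(r+1)*σ < |S b - lam|} :=
      measurableSet_lt measurable_const (measS.sub measurable_const).abs
    have h2 : MeasurableSet {b : Fin n → ℝ | |S b - lam| ≤ 2^(r+2)*σ} :=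
      measurableSet_le (measS.sub measurable_const).abs measurable_const
    exact h1.inter h2
  have EH : ∫⁻ ε, H ε ∂P ≤ ENNReal.ofReal (2*s^2*μ₀*σ) := by
    have h1 : ∫⁻ ε, H ε ∂P = ∑' r : ℕ, ∫⁻ ε, Δ (LL r ∩ BB r ε) ∂P :=
      lintegral_tsum (fun r => (Measurable.of_discrete).aemeasurable)
    rw [h1]
    have h2 : ∀ r : ℕ, ∫⁻ ε, Δ (LL r ∩ BB r ε) ∂P
        ≤ ENNReal.ofReal (s^2*μ₀*σ) * (ENNReal.ofReal (1/2))^r := by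
      intro r
      have hsw := swapX (LL r) (2^r*σ) (measLL r) (by positivity)
      refine le_trans hsw ?_
      have hΔLL : Δ (LL r) ≤ ENNReal.ofReal (μ₀*(2^(r+2)*σ)) := by
        refine le_trans (measure_mono ?_) (hyp (2^(r+2)*σ) ?_)
        · intro b hb
          exact hb.2
        · have h4 : (1:ℝ) ≤ 2^(r+2) := one_le_pow₀ one_le_two
          nlinarith
      calc Δ (LL r) * ENNReal.ofReal (s^2 * n / (4*(2^r*σ)^2))
          ≤ ENNReal.ofReal (μ₀*(2^(r+2)*σ)) * ENNReal.ofReal (s^2 * n / (4*(2^r*σ)^2)) :=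
            mul_le_mul_left hΔLL _
        _ = ENNReal.ofReal (s^2*μ₀*σ) * (ENNReal.ofReal (1/2))^r := by
            rw [← ENNReal.ofReal_pow (by norm_num), ← ENNReal.ofReal_mul (by positivity),
              ← ENNReal.ofReal_mul (by positivity)]
            congr 1
            have hp : (0:ℝ) < 2^r := by positivity
            rw [← hσ2]
            have hexp : (2:ℝ)^(r+2) = 2^r * 4 := by rw [pow_add]; norm_num
            rw [hexp]
            field_simp
            rw [← mul_pow]; norm_num
    refine le_trans (ENNReal.tsum_le_tsum h2) ?_
    rw [ENNReal.tsum_mul_left, ENNReal.tsum_geometric]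
    have he : ENNReal.ofReal (1/2) = 2⁻¹ := by
      rw [ENNReal.ofReal_div_of_pos (by norm_num)]
      simp
    rw [he, ENNReal.one_sub_inv_two, inv_inv]
    rw [show ((2:ℝ≥0∞)) = ENNReal.ofReal 2 by simp, ← ENNReal.ofReal_mul (by positivity)]
    apply ENNReal.ofReal_le_ofReal
    nlinarith [sq_nonneg s, hμ₀, hσ]
  have bad2 : P {ε | ENNReal.ofReal (16*s^2*μ₀*σ) ≤ H ε} ≤ ENNReal.ofReal (1/8) := by
    apply markov H _ _ ?_ ENNReal.ofReal_ne_top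
    · refine le_trans EH (le_of_eq ?_)
      rw [← ENNReal.ofReal_mul (by positivity)]
      congr 1
      ring
    · rw [Ne, ENNReal.ofReal_eq_zero, not_le]
      positivity
  have bad4 : P {ε | 2*σ < |∑ i, (1:ℝ) * roff θ ε i|} ≤ ENNReal.ofReal (1/16) := by
    rw [hPapply]
    apply ENNReal.ofReal_le_ofReal
    have hch := cheb θ hθ0 hθ1 (fun _ => (1:ℝ)) (2*σ) (by positivity)
    have heq : (∑ _i : Fin n, ((1:ℝ))^2) / (4*(2*σ)^2) = 1/16 := by
      have hn' : (0:ℝ) < n := by exact_mod_cast hn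
      simp only [one_pow, Finset.sum_const, Finset.card_univ, Fintype.card_fin, nsmul_eq_mul,
        mul_one]
      rw [show (4*(2*σ)^2 : ℝ) = 16*σ^2 by ring, hσ2]
      field_simp
    rw [← heq]
    refine le_trans (le_of_eq ?_) hch
    congr 1
  -- choose near-optimal center for the concentration level
  set L : ℝ≥0∞ := ⨆ z : ℝ, Δ {b | |S b - z| ≤ σ} with hLdef
  have hL1 : L ≤ 1 := iSup_le (fun z => prob_le_one)
  obtain ⟨zst, hzst⟩ : ∃ z : ℝ, L = 0 ∨ L/2 < Δ {b | |S b - z| ≤ σ} := by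
    rcases eq_or_ne L 0 with h | h
    · exact ⟨0, Or.inl h⟩
    · have hlt : L/2 < L := ENNReal.half_lt_self h (lt_of_le_of_lt hL1 ENNReal.one_lt_top).ne
      obtain ⟨z, hz⟩ := lt_iSup_iff.1 hlt
      exact ⟨z, Or.inr hz⟩
  set A₀ : Set (Fin n → ℝ) := {b | |S b - zst| ≤ σ} with hA₀def
  have measA₀ : MeasurableSet A₀ :=
    measurableSet_le (measS.sub measurable_const).abs measurable_const
  set q : ℝ≥0∞ := Δ A₀ with hqdef
  have hq1 : q ≤ 1 := prob_le_one
  set G' : (Fin n → Bool) → ℝ≥0∞ := fun ε => Δ (A₀ ∩ {b | s*σ < |X b ε|}) with hG'def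
  have EG' : ∫⁻ ε, G' ε ∂P ≤ (q/2) * ENNReal.ofReal (1/2) := by
    have hsw := swapX A₀ (s*σ) measA₀ (by positivity)
    refine le_trans hsw ?_
    have he : ENNReal.ofReal (s^2 * n / (4*(s*σ)^2)) = ENNReal.ofReal (1/4) := by
      congr 1
      rw [← hσ2]
      field_simp
    rw [he]
    have h4 : ENNReal.ofReal (1/4) = 4⁻¹ := by
      rw [ENNReal.ofReal_div_of_pos (by norm_num)]
      simp
    have h2 : ENNReal.ofReal (1/2) = 2⁻¹ := by
      rw [ENNReal.ofReal_div_of_pos (by norm_num)]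
      simp
    rw [h4, h2]
    apply le_of_eq
    rw [div_eq_mul_inv, mul_assoc]
    congr 1
    rw [show (4:ℝ≥0∞) = 2*2 by norm_num, ENNReal.mul_inv (by norm_num) (by norm_num)]
  have bad3 : P {ε | q/2 ≤ G' ε ∧ q ≠ 0} ≤ ENNReal.ofReal (1/2) := by
    rcases eq_or_ne q 0 with h | h
    · have : {ε : Fin n → Bool | q/2 ≤ G' ε ∧ q ≠ 0} = ∅ := by
        ext ε; simp [h]
      rw [this]
      simp
    · have hset : {ε : Fin n → Bool | q/2 ≤ G' ε ∧ q ≠ 0} = {ε | q/2 ≤ G' ε} := by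
        ext ε; simp [h]
      rw [hset]
      apply markov G' (q/2) _ ?_ ?_ EG'
      · simp [ENNReal.div_eq_zero_iff, h]
      · simp [ENNReal.div_eq_top]
        intro h'
        exact absurd h' (lt_of_le_of_lt hq1 ENNReal.one_lt_top).ne
  -- select a good rounding pattern
  obtain ⟨ε, hε2, hε3, hε4⟩ : ∃ ε : Fin n → Bool,
      ¬(ENNReal.ofReal (16*s^2*μ₀*σ) ≤ H ε) ∧ ¬(q/2 ≤ G' ε ∧ q ≠ 0)
        ∧ ¬(2*σ < |∑ i, (1:ℝ) * roff θ ε i|) := by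
    by_contra hcon
    push_neg at hcon
    have hsub : (Set.univ : Set (Fin n → Bool)) ⊆
        {ε | ENNReal.ofReal (16*s^2*μ₀*σ) ≤ H ε} ∪ ({ε | q/2 ≤ G' ε ∧ q ≠ 0}
          ∪ {ε | 2*σ < |∑ i, (1:ℝ) * roff θ ε i|}) := by
      intro ε _
      rcases Classical.em (ENNReal.ofReal (16*s^2*μ₀*σ) ≤ H ε) with h | h
      · exact Or.inl h
      rcases Classical.em (q/2 ≤ G' ε ∧ q ≠ 0) with h' | h'
      · exact Or.inr (Or.inl h')
      · refine Or.inr (Or.inr (hcon ε (not_le.1 h) ?_))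
        intro hle
        by_contra hq0
        exact h' ⟨hle, hq0⟩
    have := (measure_mono hsub).trans
      ((measure_union_le _ _).trans (add_le_add bad2 ((measure_union_le _ _).trans
        (add_le_add bad3 bad4))))
    rw [hPuniv] at this
    rw [← ENNReal.ofReal_add (by norm_num) (by norm_num),
      ← ENNReal.ofReal_add (by norm_num) (by norm_num)] at this
    have hlt : ENNReal.ofReal (1/8 + (1/2 + 1/16)) < 1 := ENNReal.ofReal_lt_one.2 (by norm_num)
    exact absurd (lt_of_le_of_lt this hlt) (lt_irrefl _)
  refine ⟨Y ε, ?_, ?_, ?_, ?_⟩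
  · -- (1) closeness
    intro i
    rw [hYval ε i]
    have h0 := hθ0 i
    have h1 := hθ1 i
    have hr : |roff θ ε i| ≤ 1 := by
      rw [roff, abs_le]
      cases hb : ε i <;> simp [hb] <;> constructor <;> linarith
    calc |y i - (y i + roff θ ε i)| = |roff θ ε i| := by
          rw [show y i - (y i + roff θ ε i) = -(roff θ ε i) by ring, abs_neg]
      _ ≤ 1 := hr
  · -- (2) anticoncentration at all scales
    intro t ht
    have hset : {b : Fin n → ℝ | |(∑ i, b i * ((Y ε i : ℤ) : ℝ)) - lam| ≤ t}
        ⊆ {b | |S b - lam| ≤ 2*t} ∪ ⋃ r : ℕ, (LL r ∩ BB r ε) := by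
      intro b hb
      simp only [Set.mem_setOf_eq] at hb
      rw [hS' b ε] at hb
      by_cases h2 : |S b - lam| ≤ 2*t
      · exact Or.inl h2
      · push_neg at h2
        right
        obtain ⟨k, hk1, hk2, hk3⟩ := exists_dyadic σ (|S b - lam|) hσ (by nlinarith)
        apply Set.mem_iUnion.2
        refine ⟨k-1, ?_, ?_⟩
        · have e1 : k - 1 + 1 = k := by omega
          have e2 : k - 1 + 2 = k + 1 := by omega
          simp only [hLLdef, Set.mem_setOf_eq, e1, e2]
          exact ⟨hk2, hk3⟩
        · simp only [hBBdef, Set.mem_setOf_eq]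
          have hXlow : |S b - lam| - t ≤ |X b ε| := by
            have h3 : |S b - lam| - |S b + X b ε - lam| ≤ |X b ε| := by
              have h4 : |S b - lam| - |S b + X b ε - lam| ≤ |(S b - lam) - (S b + X b ε - lam)| :=
                abs_sub_abs_le_abs_sub _ _
              have h5 : (S b - lam) - (S b + X b ε - lam) = -(X b ε) := by ring
              rw [h5, abs_neg] at h4
              exact h4
            linarith
          have hhalf : 2^(k-1) * σ < |S b - lam| / 2 := by
            have e1 : k - 1 + 1 = k := by omega
            have h6 : (2:ℝ)^k = 2^(k-1) * 2 := by rw [← pow_succ, e1]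
            rw [h6] at hk2
            linarith
          linarith
    calc Δ {b : Fin n → ℝ | |(∑ i, b i * ((Y ε i : ℤ) : ℝ)) - lam| ≤ t}
        ≤ Δ ({b | |S b - lam| ≤ 2*t} ∪ ⋃ r : ℕ, (LL r ∩ BB r ε)) := measure_mono hset
      _ ≤ Δ {b | |S b - lam| ≤ 2*t} + Δ (⋃ r : ℕ, (LL r ∩ BB r ε)) := measure_union_le _ _
      _ ≤ ENNReal.ofReal (μ₀ * (2*t)) + H ε := by
          apply add_le_add (hyp (2*t) (by linarith))
          exact measure_iUnion_le _
      _ ≤ ENNReal.ofReal (μ₀ * (2*t)) + ENNReal.ofReal (16*s^2*μ₀*σ) :=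
          add_le_add_right (le_of_lt (not_le.1 hε2)) _
      _ ≤ ENNReal.ofReal ((16*s^2+4) * μ₀ * t) := by
          rw [← ENNReal.ofReal_add (by nlinarith) (by positivity)]
          apply ENNReal.ofReal_le_ofReal
          nlinarith [mul_nonneg (mul_nonneg (sq_nonneg s) hμ₀.le) (sub_nonneg.2 ht),
            mul_pos hμ₀ (lt_of_lt_of_le hσ ht)]
  · -- (3) concentration is preserved
    rcases hzst with hL0 | hq
    · rw [hL0]
      simp
    · have hq0 : q ≠ 0 := by
        intro h
        rw [h] at hq
        simp at hq
      have hG : G' ε < q/2 := by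
        by_contra h
        exact hε3 ⟨not_lt.1 h, hq0⟩
      set m : ℕ := ⌈s⌉₊ + 1 with hmdef
      have hm1 : 1 ≤ m := by omega
      have hms : s + 1 ≤ (m:ℝ) := by
        rw [hmdef]
        push_cast
        linarith [Nat.le_ceil s]
      have hcover : A₀ ∩ {b | ¬(s*σ < |X b ε|)}
          ⊆ ⋃ i ∈ Finset.range m,
              {b : Fin n → ℝ | |(∑ i', b i' * ((Y ε i' : ℤ) : ℝ)) - (zst + (2*(i:ℝ)+1-m)*σ)| ≤ σ} := by
        intro b hb
        obtain ⟨hb1, hb2⟩ := hb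
        have hb2' : |X b ε| ≤ s*σ := not_lt.1 hb2
        have hb1' : |S b - zst| ≤ σ := hb1
        have hd : |S b + X b ε - zst| ≤ (m:ℝ)*σ := by
          have h1 : |S b + X b ε - zst| ≤ |S b - zst| + |X b ε| := by
            have := abs_add_le (S b - zst) (X b ε)
            have he : S b + X b ε - zst = (S b - zst) + X b ε := by ring
            rw [he]
            exact this
          have h2 : σ + s*σ ≤ (m:ℝ)*σ := by nlinarith
          linarith
        obtain ⟨i, hi, hii⟩ := cover_aux σ hσ m hm1 (S b + X b ε - zst) hd
        apply Set.mem_biUnion hi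
        simp only [Set.mem_setOf_eq]
        rw [hS' b ε]
        have he : S b + X b ε - (zst + (2*(i:ℝ)+1-m)*σ) = (S b + X b ε - zst) - (2*(i:ℝ)+1-m)*σ := by
          ring
        rw [he]
        exact hii
      have hAC : Δ (A₀ ∩ {b | ¬(s*σ < |X b ε|)})
          ≤ (m : ℝ≥0∞) * ⨆ z : ℝ, Δ {b : Fin n → ℝ | |(∑ i, b i * ((Y ε i : ℤ) : ℝ)) - z| ≤ σ} := by
        refine le_trans (measure_mono hcover) ?_
        refine le_trans (measure_biUnion_finset_le _ _) ?_
        calc ∑ i ∈ Finset.range m,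
              Δ {b : Fin n → ℝ | |(∑ i', b i' * ((Y ε i' : ℤ) : ℝ)) - (zst + (2*(i:ℝ)+1-m)*σ)| ≤ σ}
            ≤ ∑ _i ∈ Finset.range m,
              ⨆ z : ℝ, Δ {b : Fin n → ℝ | |(∑ i, b i * ((Y ε i : ℤ) : ℝ)) - z| ≤ σ} := by
              apply Finset.sum_le_sum
              intro i _
              exact le_iSup (fun z => Δ {b : Fin n → ℝ | |(∑ i, b i * ((Y ε i : ℤ) : ℝ)) - z| ≤ σ})
                (zst + (2*(i:ℝ)+1-m)*σ)
          _ = (m : ℝ≥0∞) * ⨆ z : ℝ, Δ {b : Fin n → ℝ | |(∑ i, b i * ((Y ε i : ℤ) : ℝ)) - z| ≤ σ} := by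
              rw [Finset.sum_const, Finset.card_range, nsmul_eq_mul]
      have hsplit : q ≤ Δ (A₀ ∩ {b | ¬(s*σ < |X b ε|)}) + G' ε := by
        rw [hqdef, hG'def]
        refine le_trans (measure_mono ?_) (measure_union_le _ _)
        intro b hb
        by_cases h : s*σ < |X b ε|
        · exact Or.inr ⟨hb, h⟩
        · exact Or.inl ⟨hb, h⟩
      set R : ℝ≥0∞ := ⨆ z : ℝ, Δ {b : Fin n → ℝ | |(∑ i, b i * ((Y ε i : ℤ) : ℝ)) - z| ≤ σ} with hRdef
      have hq2top : q/2 ≠ ⊤ := by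
        simp [ENNReal.div_eq_top]
        intro h'
        exact absurd h' (lt_of_le_of_lt hq1 ENNReal.one_lt_top).ne
      have h1 : q/2 + q/2 ≤ ((m : ℝ≥0∞) * R + G' ε) := by
        rw [ENNReal.add_halves]
        exact hsplit.trans (add_le_add hAC (le_refl _))
      have h2 : q/2 ≤ (m : ℝ≥0∞) * R := by
        have h3 : q/2 + q/2 ≤ (m : ℝ≥0∞) * R + q/2 :=
          h1.trans (add_le_add_right hG.le _)
        exact (ENNReal.add_le_add_iff_right hq2top).1 h3
      have hL2q : L ≤ q * 2 := by
        have : L/2 ≤ q := hq.le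
        calc L = L/2 * 2 := (ENNReal.div_mul_cancel (by norm_num) (by norm_num)).symm
          _ ≤ q * 2 := mul_le_mul_left this 2
      have hcval : ENNReal.ofReal (1/(4*((⌈s⌉₊:ℝ)+1))) * ((m : ℝ≥0∞) * 4) = 1 := by
        have hm4 : ((m : ℝ≥0∞) * 4) = ENNReal.ofReal ((m:ℝ) * 4) := by
          rw [ENNReal.ofReal_mul (by positivity), ENNReal.ofReal_natCast]
          norm_num
        rw [hm4, ← ENNReal.ofReal_mul (by positivity)]
        have hmm : (m:ℝ) = (⌈s⌉₊:ℝ) + 1 := by rw [hmdef]; push_cast; ring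
        rw [show (1/(4*((⌈s⌉₊:ℝ)+1))) * ((m:ℝ) * 4) = 1 by rw [hmm]; field_simp]
        simp
      calc ENNReal.ofReal (1/(4*((⌈s⌉₊:ℝ)+1))) * L
          ≤ ENNReal.ofReal (1/(4*((⌈s⌉₊:ℝ)+1))) * (q * 2) := mul_le_mul_right hL2q _
        _ ≤ ENNReal.ofReal (1/(4*((⌈s⌉₊:ℝ)+1))) * (((m : ℝ≥0∞) * R) * 2 * 2) := by
            apply mul_le_mul_right
            have hq22 : q ≤ ((m : ℝ≥0∞) * R) * 2 := by
              calc q = q/2 * 2 := (ENNReal.div_mul_cancel (by norm_num) (by norm_num)).symm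
                _ ≤ ((m : ℝ≥0∞) * R) * 2 := mul_le_mul_left h2 2
            exact mul_le_mul_left hq22 2
        _ = (ENNReal.ofReal (1/(4*((⌈s⌉₊:ℝ)+1))) * ((m : ℝ≥0∞) * 4)) * R := by ring
        _ = 1 * R := by rw [hcval]
        _ = R := one_mul R
  · -- (4) sum is preserved
    have h := not_lt.1 hε4
    have hsum : (∑ i, ((Y ε i : ℤ) : ℝ)) = (∑ i, y i) + ∑ i, roff θ ε i := by
      rw [← Finset.sum_add_distrib]
      exact Finset.sum_congr rfl (fun i _ => hYval ε i)
    rw [hsum]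
    have he : (∑ i, y i) - ((∑ i, y i) + ∑ i, roff θ ε i) = -(∑ i, roff θ ε i) := by ring
    rw [he, abs_neg]
    have h1 : (∑ i, (1:ℝ) * roff θ ε i) = ∑ i, roff θ ε i := by
      exact Finset.sum_congr rfl (fun i _ => one_mul _)
    rw [h1] at h
    nlinarith [mul_nonneg (sq_nonneg s) hσ.le, hσ]
end
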